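/- arXiv:2603.29973 — 5 statements merged into one kernel-verified Lean document; each statement's English description precedes it below -/
import Mathlib

section
/- The series \sum_{k=1}^{\infty} 1/(k^2 \binom{2k}{k}) converges to \pi^2/18, which equals \zeta(2)/3. -/
open Real MeasureTheory

-- Beta integral with natural exponents
lemma beta_nat (m n : ℕ) : ∫ x in (0:ℝ)..1, x ^ m * (1 - x) ^ n
    = (m.factorial * n.factorial : ℝ) / (m + n + 1).factorial := by
  have hs : (0:ℝ) < Complex.re ((m:ℂ) + 1) := by simp; positivity
  have ht : (0:ℝ) < Complex.re ((n:ℂ) + 1) := by simp; positivity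
  have h := Complex.Gamma_mul_Gamma_eq_betaIntegral hs ht
  rw [show ((m:ℂ)+1) + ((n:ℂ)+1) = ((m+n+1 : ℕ) : ℂ) + 1 by push_cast; ring] at h
  rw [Complex.Gamma_nat_eq_factorial] at h
  rw [show ((m:ℂ)+1) = ((m:ℕ):ℂ) + 1 by norm_num, Complex.Gamma_nat_eq_factorial] at h
  rw [show ((n:ℕ):ℂ)+1 = ((n:ℕ):ℂ) + 1 by norm_num, Complex.Gamma_nat_eq_factorial] at h
  have hbeta : Complex.betaIntegral ((m:ℂ)+1) ((n:ℂ)+1)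
      = ((∫ x in (0:ℝ)..1, x ^ m * (1 - x) ^ n : ℝ) : ℂ) := by
    rw [Complex.betaIntegral, ← intervalIntegral.integral_ofReal]
    apply intervalIntegral.integral_congr
    intro x hx
    rw [show (m:ℂ)+1-1 = ((m:ℕ):ℂ) by ring, show (n:ℂ)+1-1 = ((n:ℕ):ℂ) by ring,
      ]
    simp only [Complex.cpow_natCast]
    push_cast
    ring
  rw [hbeta] at h
  -- h : (m! : ℂ) * n! = (m+n+1)! * ↑(∫ ...)
  have h2 : ((m.factorial * n.factorial : ℝ) : ℂ) = (((m+n+1).factorial : ℝ) : ℂ) * ((∫ x in (0:ℝ)..1, x ^ m * (1 - x) ^ n : ℝ) : ℂ) := by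
    push_cast
    push_cast at h
    linear_combination h
  have h3 : (m.factorial * n.factorial : ℝ) = ((m+n+1).factorial : ℝ) * (∫ x in (0:ℝ)..1, x ^ m * (1 - x) ^ n) := by
    exact_mod_cast h2
  rw [eq_div_iff (by exact_mod_cast (m+n+1).factorial_ne_zero)]
  linarith [h3]

lemma hasSum_alt : HasSum (fun n : ℕ => (-1:ℝ)^n / ((n:ℝ)+1)^2) (π^2/12) := by
  have h1 : HasSum (fun n : ℕ => (1:ℝ)/(n:ℝ)^2) (π^2/6) := hasSum_zeta_two
  have h2 : HasSum (fun n : ℕ => (1:ℝ)/((2*(n:ℝ)))^2) (π^2/24) := by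
    have := h1.div_const 4
    convert this using 1
    · rfl
    · funext n; ring
    · ring
  have hoddS : Summable (fun n : ℕ => (1:ℝ)/((2*(n:ℝ)+1))^2) := by
    have hbase : Summable (fun n : ℕ => (1:ℝ)/((n:ℝ)+1)^2) := by
      have := (summable_nat_add_iff 1).mpr h1.summable
      apply this.congr; intro n; push_cast; ring_nf
    apply Summable.of_nonneg_of_le (fun n => by positivity) ?_ hbase
    intro n
    apply one_div_le_one_div_of_le (by positivity)
    nlinarith [Nat.cast_nonneg (α := ℝ) n]
  set c := ∑' n : ℕ, (1:ℝ)/((2*(n:ℝ)+1))^2 with hc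
  have hodd : HasSum (fun n : ℕ => (1:ℝ)/((2*(n:ℝ)+1))^2) c := hoddS.hasSum
  have heq : HasSum (fun n : ℕ => (1:ℝ)/(n:ℝ)^2) (π^2/24 + c) := by
    apply HasSum.even_add_odd
    · convert h2 using 2 with n; push_cast; ring
    · convert hodd using 2 with n; push_cast; ring
  have hcval : c = π^2/8 := by
    have := h1.unique heq
    linarith
  have hw : HasSum (fun n : ℕ => (-1:ℝ)^(n+1)/(n:ℝ)^2) (π^2/12) := by
    have := HasSum.even_add_odd (f := fun n : ℕ => (-1:ℝ)^(n+1)/(n:ℝ)^2)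
      (m := -(π^2/24)) (m' := c) (by convert h2.neg using 1; rfl; funext n; simp [pow_succ, pow_mul, neg_one_sq]; push_cast; ring_nf) (by convert hodd using 1; funext n; simp [pow_succ, pow_mul, neg_one_sq])
    convert this using 1; rw [hcval]; ring
  have := (hasSum_nat_add_iff (f := fun n : ℕ => (-1:ℝ)^(n+1)/(n:ℝ)^2) 1).mpr
    (by simpa using hw)
  convert this using 1
  · rfl
  funext n
  simp [pow_succ, pow_mul, neg_one_sq]

noncomputable def myμ : Measure ℝ := volume.restrict (Set.Ioc (0:ℝ) 1)

noncomputable def φ (x : ℝ) : ℝ := (Real.log (1+x) - Real.log (1+x^3))/x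

noncomputable def ff (k : ℕ) (x : ℝ) : ℝ := x^k * (1-x)^(k+1) / ((k:ℝ)+1)

noncomputable def cc (n : ℕ) (x : ℝ) : ℝ := (-1:ℝ)^n * (x^n - x^(3*n+2)) / ((n:ℝ)+1)

lemma ae_Ioo : ∀ᵐ x ∂myμ, x ∈ Set.Ioo (0:ℝ) 1 := by
  have h1 : ∀ᵐ x ∂myμ, x ∈ Set.Ioc (0:ℝ) 1 := ae_restrict_mem measurableSet_Ioc
  have h2 : ∀ᵐ x ∂myμ, x ≠ (1:ℝ) := by
    apply ae_restrict_of_ae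
    rw [ae_iff]
    simpa using Real.volume_singleton
  filter_upwards [h1, h2] with x hx hx1
  exact ⟨hx.1, lt_of_le_of_ne hx.2 hx1⟩

lemma hasSum_ff {x : ℝ} (hx : x ∈ Set.Ioo (0:ℝ) 1) :
    HasSum (fun k => ff k x) (φ x) := by
  obtain ⟨hx0, hx1⟩ := hx
  have habs : |x*(1-x)| < 1 := by
    rw [abs_of_nonneg (by nlinarith)]
    nlinarith
  have h := hasSum_pow_div_log_of_abs_lt_one habs
  have h2 := h.div_const x
  have hval : -Real.log (1 - x*(1-x)) / x = φ x := by
    have e1 : 1 - x*(1-x) = (1+x^3)/(1+x) := by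
      field_simp
      ring
    rw [e1, Real.log_div (by nlinarith [pow_pos hx0 3]) (by nlinarith), φ]
    ring
  rw [hval] at h2
  apply h2.congr_fun
  intro k
  rw [ff, mul_pow, pow_succ x k]
  field_simp

lemma hasSum_cc {x : ℝ} (hx : x ∈ Set.Ioo (0:ℝ) 1) :
    HasSum (fun n => cc n x) (φ x) := by
  obtain ⟨hx0, hx1⟩ := hx
  have hg := (hasSum_pow_div_log_of_abs_lt_one (x := -x)
    (by rw [abs_neg, abs_of_nonneg hx0.le]; exact hx1)).neg.div_const x
  have hh := (hasSum_pow_div_log_of_abs_lt_one (x := -x^3)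
    (by rw [abs_neg, abs_of_nonneg (by positivity)]; exact pow_lt_one₀ hx0.le hx1 (by norm_num))).neg.div_const x
  have e1 : (1:ℝ) - -x = 1 + x := by ring
  have e2 : (1:ℝ) - -x^3 = 1 + x^3 := by ring
  rw [e1] at hg
  rw [e2] at hh
  have h := hg.sub hh
  have hval : - -Real.log (1+x) / x - - -Real.log (1+x^3) / x = φ x := by
    rw [φ]; ring
  rw [hval] at h
  apply h.congr_fun
  intro n
  rw [cc]
  have en : (-x)^(n+1) = (-1:ℝ)^(n+1) * x^(n+1) := by
    rw [neg_pow]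
  have en3 : (-x^3)^(n+1) = (-1:ℝ)^(n+1) * x^(3*n+3) := by
    rw [neg_pow, ← pow_mul, show 3*(n+1) = 3*n+3 from by ring]
  rw [en, en3]
  rw [pow_succ]
  field_simp
  ring

lemma ff_integral (k : ℕ) : ∫ x, ff k x ∂myμ = (k.factorial : ℝ)^2 / ((2*k+2).factorial) := by
  rw [myμ, ← intervalIntegral.integral_of_le zero_le_one]
  have : ∀ x : ℝ, ff k x = x^k * (1-x)^(k+1) / ((k:ℝ)+1) := fun x => rfl
  simp_rw [this]
  rw [intervalIntegral.integral_div, beta_nat]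
  have h1 : ((k+1).factorial : ℝ) = ((k:ℝ)+1) * k.factorial := by
    exact_mod_cast Nat.factorial_succ k
  have h2 : k + (k+1) + 1 = 2*k+2 := by ring
  rw [h2, h1]
  have hne : ((2*k+2).factorial : ℝ) ≠ 0 := Nat.cast_ne_zero.mpr (2*k+2).factorial_ne_zero
  have hk : ((k:ℝ)+1) ≠ 0 := by positivity
  field_simp

lemma a_eq (k : ℕ) : 1 / (((k + 1 : ℕ) : ℝ) ^ 2 * (Nat.choose (2 * (k + 1)) (k + 1) : ℝ))
    = (k.factorial : ℝ)^2 / ((2*k+2).factorial) := by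
  have hle : k+1 ≤ 2*(k+1) := by omega
  have hcf := Nat.choose_mul_factorial_mul_factorial hle
  rw [show 2*(k+1) - (k+1) = k+1 from by omega] at hcf
  have hcfR : ((2*(k+1)).choose (k+1) : ℝ) * (k+1).factorial * (k+1).factorial
      = ((2*(k+1)).factorial : ℝ) := by exact_mod_cast congrArg Nat.cast hcf
  have h1 : ((k+1).factorial : ℝ) = ((k:ℝ)+1) * k.factorial := by
    exact_mod_cast Nat.factorial_succ k
  have h2 : (2*(k+1)) = 2*k+2 := by ring
  rw [h2] at hcfR
  have hC : (0:ℝ) < ((2*(k+1)).choose (k+1) : ℝ) := by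
    exact_mod_cast Nat.choose_pos hle
  rw [h2] at hC
  have hfk : (0:ℝ) < (k.factorial : ℝ) := by exact_mod_cast k.factorial_pos
  have hfn : (0:ℝ) < ((2*k+2).factorial : ℝ) := by exact_mod_cast (2*k+2).factorial_pos
  have hk1 : (((k+1:ℕ)):ℝ) = (k:ℝ)+1 := by push_cast; ring
  rw [hk1, h2]
  rw [div_eq_div_iff (by positivity) hfn.ne']
  rw [h1] at hcfR
  nlinarith [hcfR]

lemma sq_summable : Summable (fun k : ℕ => 1/((k:ℝ)+1)^2) := by
  have := (summable_nat_add_iff 1).mpr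
    ((Real.summable_one_div_nat_pow (p := 2)).mpr one_lt_two)
  apply this.congr; intro n; push_cast; ring_nf

lemma ff_cont (k : ℕ) : Continuous (ff k) := by
  unfold ff; fun_prop

lemma cc_cont (n : ℕ) : Continuous (cc n) := by
  unfold cc; fun_prop

lemma step1 : HasSum (fun k : ℕ =>
    1 / (((k + 1 : ℕ) : ℝ) ^ 2 * (Nat.choose (2 * (k + 1)) (k + 1) : ℝ)))
    (∫ x, φ x ∂myμ) := by
  have hint : ∀ k, Integrable (ff k) myμ := fun k => (ff_cont k).integrableOn_Ioc
  have hnorm : ∀ k, ∫ x, ‖ff k x‖ ∂myμ = ∫ x, ff k x ∂myμ := by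
    intro k
    apply integral_congr_ae
    filter_upwards [ae_Ioo] with x hx
    rw [Real.norm_of_nonneg]
    have h1 : (0:ℝ) ≤ x := hx.1.le
    have h2 : (0:ℝ) ≤ 1 - x := by linarith [hx.2]
    unfold ff; positivity
  have hfle : ∀ k : ℕ, (k.factorial : ℝ)^2 / ((2*k+2).factorial) ≤ 1/((k:ℝ)+1)^2 := by
    intro k
    rw [← a_eq]
    have hC : (1:ℝ) ≤ ((2*(k+1)).choose (k+1) : ℝ) := by
      exact_mod_cast Nat.succ_le_of_lt (Nat.choose_pos (by omega : k+1 ≤ 2*(k+1)))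
    have hk1 : (((k+1:ℕ)):ℝ) = (k:ℝ)+1 := by push_cast; ring
    rw [hk1]
    have h0 : (0:ℝ) < ((k:ℝ)+1)^2 := by positivity
    rw [div_le_div_iff₀ (by positivity) h0]
    nlinarith
  have hsum : Summable (fun k => ∫ x, ‖ff k x‖ ∂myμ) := by
    apply Summable.of_nonneg_of_le
      (fun k => integral_nonneg (fun x => norm_nonneg _)) ?_ sq_summable
    intro k
    rw [hnorm k, ff_integral k]
    exact hfle k
  have h := hasSum_integral_of_summable_integral_norm hint hsum
  have heq : ∫ x, (∑' k, ff k x) ∂myμ = ∫ x, φ x ∂myμ := by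
    apply integral_congr_ae
    filter_upwards [ae_Ioo] with x hx
    exact (hasSum_ff hx).tsum_eq
  rw [heq] at h
  apply h.congr_fun
  intro k
  rw [a_eq, ← ff_integral]

lemma cc_norm_integral (n : ℕ) :
    (∫ x, ‖cc n x‖ ∂myμ = 2/3 * (1/((n:ℝ)+1)^2)) ∧
    (∫ x, cc n x ∂myμ = (-1:ℝ)^n * (2/3) * (1/((n:ℝ)+1)^2)) := by
  have key : ∫ x, ((x^n - x^(3*n+2)) / ((n:ℝ)+1)) ∂myμ = 2/3 * (1/((n:ℝ)+1)^2) := by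
    rw [myμ, ← intervalIntegral.integral_of_le zero_le_one]
    rw [intervalIntegral.integral_div]
    rw [intervalIntegral.integral_sub (intervalIntegral.intervalIntegrable_pow n)
      (intervalIntegral.intervalIntegrable_pow (3*n+2))]
    rw [integral_pow, integral_pow]
    rw [zero_pow (by omega : n+1 ≠ 0), zero_pow (by omega : 3*n+2+1 ≠ 0),
      one_pow, one_pow]
    have h1 : ((n:ℝ)+1) ≠ 0 := by positivity
    have h2 : ((3*n+2:ℕ):ℝ)+1 = 3*((n:ℝ)+1) := by push_cast; ring
    rw [h2]
    field_simp
    ring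
  constructor
  · have hcongr : ∫ x, ‖cc n x‖ ∂myμ = ∫ x, ((x^n - x^(3*n+2)) / ((n:ℝ)+1)) ∂myμ := by
      apply integral_congr_ae
      filter_upwards [ae_Ioo] with x hx
      have h1 : (0:ℝ) ≤ x := hx.1.le
      have hterm : x^(3*n+2) ≤ x^n := by
        apply pow_le_pow_of_le_one h1 hx.2.le
        omega
      unfold cc
      rw [Real.norm_eq_abs, abs_div, abs_mul, abs_pow, abs_neg, abs_one, one_pow, one_mul,
        abs_of_nonneg (by linarith : (0:ℝ) ≤ x^n - x^(3*n+2)),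
        abs_of_nonneg (by positivity : (0:ℝ) ≤ (n:ℝ)+1)]
    rw [hcongr, key]
  · have hcc : ∀ x : ℝ, cc n x = (-1:ℝ)^n * ((x^n - x^(3*n+2)) / ((n:ℝ)+1)) := by
      intro x; unfold cc; ring
    simp_rw [hcc]
    rw [integral_const_mul, key]
    ring

lemma step2 : ∫ x, φ x ∂myμ = π^2/18 := by
  have hint : ∀ n, Integrable (cc n) myμ := fun n => (cc_cont n).integrableOn_Ioc
  have hsum : Summable (fun n => ∫ x, ‖cc n x‖ ∂myμ) := by
    apply Summable.congr ((sq_summable.mul_left (2/3)))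
    intro n
    rw [(cc_norm_integral n).1]
  have h := (integral_tsum_of_summable_integral_norm hint hsum).symm
  have heq : ∫ x, φ x ∂myμ = ∫ x, (∑' n, cc n x) ∂myμ := by
    apply integral_congr_ae
    filter_upwards [ae_Ioo] with x hx
    exact ((hasSum_cc hx).tsum_eq).symm
  rw [heq, h]
  have hval : HasSum (fun n => ∫ x, cc n x ∂myμ) (π^2/18) := by
    have := hasSum_alt.mul_left (2/3)
    have h2 : 2/3 * (π^2/12) = π^2/18 := by ring
    rw [h2] at this
    apply this.congr_fun
    intro n
    rw [(cc_norm_integral n).2]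
    ring
  exact hval.tsum_eq

theorem stmt_2 :
    HasSum (fun k : ℕ =>
      1 / (((k + 1 : ℕ) : ℝ) ^ 2 * (Nat.choose (2 * (k + 1)) (k + 1) : ℝ)))
      (π ^ 2 / 18) ∧
    ((π ^ 2 / 18 : ℝ) : ℂ) = riemannZeta 2 / 3 := by
  constructor
  · have := step1
    rwa [step2] at this
  · rw [riemannZeta_two]
    push_cast
    ring
end

section
/- The alternating series \sum_{k=1}^{\infty} (-1)^k/(k^3 \binom{2k}{k}) converges to -\frac{2}{5}\zeta(3). -/
open Finset Filter Topology

noncomputable def eps' (j d : ℕ) : ℝ :=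
  (-1) ^ (j + 1) * (j.factorial : ℝ) ^ 2 * (d.factorial : ℝ) /
    (2 * (j : ℝ) ^ 3 * ((2 * j + d).factorial : ℝ))

noncomputable def Hf (i d : ℕ) : ℝ :=
  (-1) ^ i * ((i + 1).factorial : ℝ) ^ 2 * (d.factorial : ℝ) /
    (((i : ℝ) + 1 + (d : ℝ)) ^ 2 * ((i : ℝ) + 1) ^ 2 * ((2 * i + d + 1).factorial : ℝ))

noncomputable def EE (N : ℕ) : ℝ := ∑ k ∈ range N, eps' (k + 1) (N - 1 - k)

noncomputable def fs (k : ℕ) : ℝ :=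
  (-1 : ℝ) ^ (k + 1) / (((k + 1 : ℕ) : ℝ) ^ 3 * (Nat.choose (2 * (k + 1)) (k + 1) : ℝ))

lemma L1 (i e : ℕ) :
    eps' (i + 1) (e + 1) - eps' (i + 1) e = Hf (i + 1) e - Hf i (e + 1) := by
  simp only [eps', Hf]
  rw [show 2 * (i + 1) + (e + 1) = (2 * i + e + 2) + 1 by ring,
      show 2 * (i + 1) + e = (2 * i + e + 1) + 1 by ring,
      show 2 * i + e + 1 + 1 + 1 = (2 * i + e + 2) + 1 by ring,
      show 2 * i + (e + 1) + 1 = (2 * i + e + 1) + 1 by ring,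
      show (i + 1) + 1 = (i + 1) + 1 from rfl]
  rw [Nat.factorial_succ (2 * i + e + 2), Nat.factorial_succ (2 * i + e + 1),
      Nat.factorial_succ ((i + 1)), Nat.factorial_succ e]
  have hfe : ((e.factorial : ℝ)) ≠ 0 := by positivity
  have hff : (((2 * i + e + 1).factorial : ℝ)) ≠ 0 := by positivity
  have hfi : (((i + 1).factorial : ℝ)) ≠ 0 := by positivity
  push_cast
  have h1 : ((i : ℝ) + 1) ≠ 0 := by positivity
  have h2 : ((i : ℝ) + 1 + 1) ≠ 0 := by positivity
  have h3 : ((i : ℝ) + 1 + 1 + e) ≠ 0 := by positivity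
  have h4 : ((i : ℝ) + 1 + (e + 1)) ≠ 0 := by positivity
  have h5 : (2 * (i : ℝ) + e + 2) ≠ 0 := by positivity
  have h6 : (2 * (i : ℝ) + e + 3) ≠ 0 := by positivity
  field_simp
  ring

lemma choose_cast (m : ℕ) :
    ((Nat.choose (2 * (m + 1)) (m + 1) : ℕ) : ℝ) * ((m + 1).factorial : ℝ) ^ 2
      = ((2 * (m + 1)).factorial : ℝ) := by
  have h := Nat.choose_mul_factorial_mul_factorial (show m + 1 ≤ 2 * (m + 1) by omega)
  rw [show 2 * (m + 1) - (m + 1) = m + 1 by omega] at h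
  have := congrArg (fun x : ℕ => (x : ℝ)) h
  push_cast at this ⊢
  rw [← this]; ring

lemma L2 (m : ℕ) :
    Hf m 0 - Hf 0 m + eps' (m + 1) 0
      = -(5 / 2) * fs m - 1 / ((m : ℝ) + 1) ^ 3 := by
  simp only [Hf, eps', fs]
  have hf3 : (((m + 1).factorial : ℝ)) ≠ 0 := by positivity
  have hcc : ((Nat.choose (2 * (m + 1)) (m + 1) : ℕ) : ℝ)
      = (2 * (m : ℝ) + 2) * ((2 * m + 1).factorial : ℝ) / ((m + 1).factorial : ℝ) ^ 2 := by
    have h := Nat.choose_mul_factorial_mul_factorial (show m + 1 ≤ 2 * (m + 1) by omega)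
    rw [show 2 * (m + 1) - (m + 1) = m + 1 by omega] at h
    have h2 := congrArg (fun x : ℕ => (x : ℝ)) h
    have hfact : (((2 * (m + 1)).factorial : ℕ) : ℝ)
        = (2 * (m : ℝ) + 2) * ((2 * m + 1).factorial : ℝ) := by
      rw [show 2 * (m + 1) = (2 * m + 1) + 1 by ring, Nat.factorial_succ]
      push_cast; ring
    push_cast at h2
    push_cast at hfact
    rw [hfact] at h2
    field_simp
    linarith [h2]
  rw [hcc]
  rw [show 2 * (m + 1) + 0 = (2 * m + 1) + 1 by ring,
      show 2 * m + 0 + 1 = 2 * m + 1 by ring,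
      show 2 * 0 + m + 1 = m + 1 by ring]
  rw [Nat.factorial_succ (2 * m + 1), Nat.factorial_succ m]
  have hf1 : ((m.factorial : ℝ)) ≠ 0 := by positivity
  have hf2 : (((2 * m + 1).factorial : ℝ)) ≠ 0 := by positivity
  rw [Nat.factorial_succ m] at hf3
  push_cast at hf3 ⊢
  have h1 : ((m : ℝ) + 1) ≠ 0 := by positivity
  have h2 : (2 * (m : ℝ) + 1 + 1) ≠ 0 := by positivity
  have h3 : (2 * (m : ℝ) + 2) ≠ 0 := by positivity
  field_simp
  ring

lemma key (m : ℕ) :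
    EE (m + 1) - EE m = -(5 / 2) * fs m - 1 / ((m : ℝ) + 1) ^ 3 := by
  have hE1 : EE (m + 1) = (∑ k ∈ range m, eps' (k + 1) (m - k)) + eps' (m + 1) 0 := by
    simp only [EE]
    rw [sum_range_succ, show m + 1 - 1 - m = 0 by omega]
    have : ∀ k ∈ range m, eps' (k + 1) (m + 1 - 1 - k) = eps' (k + 1) (m - k) := by
      intro k _
      congr 1
    rw [sum_congr rfl this]
  have hdiff : (∑ k ∈ range m, eps' (k + 1) (m - k)) - EE m
      = ∑ k ∈ range m, (Hf (k + 1) (m - 1 - k) - Hf k (m - k)) := by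
    simp only [EE]
    rw [← sum_sub_distrib]
    apply sum_congr rfl
    intro k hk
    simp only [mem_range] at hk
    have he : m - k = (m - 1 - k) + 1 := by omega
    rw [he, L1 k (m - 1 - k), ← he]
  have htel : ∑ k ∈ range m, (Hf (k + 1) (m - (k + 1)) - Hf k (m - k))
      = Hf m (m - m) - Hf 0 (m - 0) := sum_range_sub (fun j => Hf j (m - j)) m
  have heq : ∑ k ∈ range m, (Hf (k + 1) (m - 1 - k) - Hf k (m - k))
      = Hf m 0 - Hf 0 m := by
    rw [show Hf m 0 - Hf 0 m = Hf m (m - m) - Hf 0 (m - 0) by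
          rw [Nat.sub_self, Nat.sub_zero], ← htel]
    apply sum_congr rfl
    intro k hk
    congr 2
    omega
  have : EE (m + 1) - EE m = Hf m 0 - Hf 0 m + eps' (m + 1) 0 := by
    rw [hE1]
    have := hdiff.trans heq
    linarith [this]
  rw [this, L2]

lemma psum (N : ℕ) :
    ∑ k ∈ range N, fs k
      = -(2 / 5) * (∑ n ∈ range N, 1 / ((n : ℝ) + 1) ^ 3) - (2 / 5) * EE N := by
  induction N with
  | zero => simp [EE]
  | succ n ih =>
    rw [sum_range_succ, sum_range_succ, ih]
    have hk := key n
    have : EE (n + 1) = EE n + (-(5 / 2) * fs n - 1 / ((n : ℝ) + 1) ^ 3) := by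
      linarith [hk]
    rw [this]
    ring

lemma cge : ∀ i d : ℕ, i + d + 2 ≤ Nat.choose (2 * i + d + 2) (i + 1) := by
  intro i
  induction i with
  | zero =>
    intro d
    rw [show 2 * 0 + d + 2 = d + 2 by ring, Nat.choose_one_right]
  | succ i ih =>
    intro d
    rw [show 2 * (i + 1) + d + 2 = (2 * i + (d + 1) + 2) + 1 by ring,
        Nat.choose_succ_succ (2 * i + (d + 1) + 2) (i + 1)]
    have := ih (d + 1)
    omega

lemma NL (i d : ℕ) :
    (i + d + 2) * ((i + 1).factorial) ^ 2 * d.factorial ≤ (2 * (i + 1) + d).factorial := by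
  have hd : (i + 1).factorial * d.factorial ≤ (i + d + 1).factorial := by
    have h := Nat.factorial_mul_factorial_dvd_factorial_add (i + 1) d
    rw [show i + 1 + d = i + d + 1 by ring] at h
    exact Nat.le_of_dvd (Nat.factorial_pos _) h
  have hch := Nat.choose_mul_factorial_mul_factorial (show i + 1 ≤ 2 * i + d + 2 by omega)
  rw [show 2 * i + d + 2 - (i + 1) = i + d + 1 by omega] at hch
  have hc := cge i d
  calc (i + d + 2) * ((i + 1).factorial) ^ 2 * d.factorial
      = (i + d + 2) * (i + 1).factorial * ((i + 1).factorial * d.factorial) := by ring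
    _ ≤ Nat.choose (2 * i + d + 2) (i + 1) * (i + 1).factorial * (i + d + 1).factorial := by
        exact Nat.mul_le_mul (Nat.mul_le_mul_right _ hc) hd
    _ = (2 * i + d + 2).factorial := hch
    _ = (2 * (i + 1) + d).factorial := by rw [show 2 * (i + 1) + d = 2 * i + d + 2 by ring]

lemma eps_bound (i d : ℕ) :
    |eps' (i + 1) d| ≤ 1 / (2 * ((i : ℝ) + 1) ^ 3 * ((i : ℝ) + (d : ℝ) + 2)) := by
  have hnat := NL i d
  have hreal : ((i : ℝ) + d + 2) * (((i + 1).factorial : ℝ)) ^ 2 * (d.factorial : ℝ)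
      ≤ (((2 * (i + 1) + d).factorial : ℝ)) := by exact_mod_cast hnat
  rw [eps', abs_div, abs_mul, abs_mul, abs_pow, abs_neg, abs_one, one_pow, one_mul,
      abs_of_nonneg (by positivity : (0:ℝ) ≤ ((i + 1).factorial : ℝ) ^ 2),
      abs_of_nonneg (by positivity : (0:ℝ) ≤ (d.factorial : ℝ)),
      abs_of_nonneg (by positivity : (0:ℝ) ≤ 2 * ((i + 1 : ℕ) : ℝ) ^ 3 * ((2 * (i + 1) + d).factorial : ℝ))]
  rw [div_le_div_iff₀ (by positivity) (by positivity)]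
  push_cast
  nlinarith [hreal, sq_nonneg ((i:ℝ)+1), mul_le_mul_of_nonneg_left hreal
    (by positivity : (0:ℝ) ≤ 2 * ((i : ℝ) + 1) ^ 3)]

lemma hsummable : Summable (fun n : ℕ => 1 / ((n : ℝ) + 1) ^ 3) := by
  have h := Real.summable_one_div_nat_pow.mpr (show 1 < 3 by norm_num)
  have h2 := (summable_nat_add_iff 1).mpr h
  apply h2.congr
  intro n
  push_cast
  ring

lemma EE_tendsto : Filter.Tendsto EE atTop (nhds 0) := by
  set Z := ∑' n : ℕ, 1 / ((n : ℝ) + 1) ^ 3 with hZ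
  have hZnn : 0 ≤ Z := tsum_nonneg (fun n => by positivity)
  have hb : ∀ N, |EE N| ≤ Z * (1 / 2) * (1 / ((N : ℝ) + 1)) := by
    intro N
    calc |EE N| ≤ ∑ k ∈ range N, |eps' (k + 1) (N - 1 - k)| :=
          Finset.abs_sum_le_sum_abs _ _
      _ ≤ ∑ k ∈ range N, (1 / ((k : ℝ) + 1) ^ 3) * (1 / (2 * ((N : ℝ) + 1))) := by
          apply Finset.sum_le_sum
          intro k hk
          have hk' : k < N := mem_range.mp hk
          have hb := eps_bound k (N - 1 - k)
          have hcast : ((N - 1 - k : ℕ) : ℝ) = (N : ℝ) - 1 - k := by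
            have h : (N - 1 - k) + (k + 1) = N := by omega
            have := congrArg (fun x : ℕ => (x : ℝ)) h
            push_cast at this
            linarith
          rw [hcast] at hb
          calc |eps' (k + 1) (N - 1 - k)|
              ≤ 1 / (2 * ((k : ℝ) + 1) ^ 3 * ((k : ℝ) + ((N : ℝ) - 1 - k) + 2)) := hb
            _ = (1 / ((k : ℝ) + 1) ^ 3) * (1 / (2 * ((N : ℝ) + 1))) := by
                rw [show (k : ℝ) + ((N : ℝ) - 1 - k) + 2 = (N : ℝ) + 1 by ring]
                rw [div_mul_div_comm, one_mul]
                ring_nf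
      _ = (∑ k ∈ range N, 1 / ((k : ℝ) + 1) ^ 3) * (1 / (2 * ((N : ℝ) + 1))) := by
          rw [← Finset.sum_mul]
      _ ≤ Z * (1 / (2 * ((N : ℝ) + 1))) := by
          apply mul_le_mul_of_nonneg_right _ (by positivity)
          exact Summable.sum_le_tsum (range N) (fun i _ => by positivity) hsummable
      _ = Z * (1 / 2) * (1 / ((N : ℝ) + 1)) := by
          rw [mul_assoc]
          congr 1
          rw [div_mul_div_comm, one_mul]
  have ht : Filter.Tendsto (fun N : ℕ => Z * (1 / 2) * (1 / ((N : ℝ) + 1))) atTop (nhds 0) := by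
    have := tendsto_one_div_add_atTop_nhds_zero_nat.const_mul (Z * (1 / 2))
    simpa using this
  apply squeeze_zero_norm _ ht
  intro n
  rw [Real.norm_eq_abs]
  exact hb n

theorem stmt_5 :
    HasSum (fun k : ℕ =>
      (-1 : ℝ) ^ (k + 1) /
        (((k + 1 : ℕ) : ℝ) ^ 3 * (Nat.choose (2 * (k + 1)) (k + 1) : ℝ)))
      (-(2 / 5) * ∑' n : ℕ, 1 / ((n : ℝ) + 1) ^ 3) := by
  have hsf : Summable fs := by
    apply Summable.of_norm_bounded hsummable
    intro k
    rw [fs, Real.norm_eq_abs, abs_div, abs_pow, abs_neg, abs_one, one_pow]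
    have hC : (1 : ℝ) ≤ (Nat.choose (2 * (k + 1)) (k + 1) : ℝ) := by
      exact_mod_cast Nat.one_le_iff_ne_zero.mpr
        (Nat.choose_pos (show k + 1 ≤ 2 * (k + 1) by omega)).ne'
    have hpos : (0 : ℝ) < ((k + 1 : ℕ) : ℝ) ^ 3 := by positivity
    rw [abs_of_nonneg (by positivity : (0:ℝ) ≤ ((k + 1 : ℕ) : ℝ) ^ 3 * (Nat.choose (2 * (k + 1)) (k + 1) : ℝ))]
    rw [div_le_div_iff₀ (by positivity) (by positivity)]
    push_cast
    nlinarith [mul_le_mul_of_nonneg_left hC (by positivity : (0:ℝ) ≤ ((k:ℝ)+1)^3)]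
  set Z := ∑' n : ℕ, 1 / ((n : ℝ) + 1) ^ 3 with hZ
  have h1 : Filter.Tendsto (fun N => ∑ k ∈ range N, fs k) atTop (nhds (∑' k, fs k)) :=
    hsf.hasSum.tendsto_sum_nat
  have h2 : Filter.Tendsto (fun N => ∑ k ∈ range N, fs k) atTop (nhds (-(2 / 5) * Z - (2 / 5) * 0)) := by
    apply Filter.Tendsto.congr (fun N => (psum N).symm)
    exact (hsummable.hasSum.tendsto_sum_nat.const_mul _).sub (EE_tendsto.const_mul _)
  have heq : ∑' k, fs k = -(2 / 5) * Z := by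
    have := tendsto_nhds_unique h1 h2
    rw [this]; ring
  have := hsf.hasSum
  rw [heq] at this
  exact this
end

section
/- Zeilberger's series identity: \sum_{k=1}^{\infty} (21k-8)/(k^3 \binom{2k}{k}^3) = \pi^2/6. -/
open Real Filter Finset Nat Topology

namespace ZWZ

noncomputable def F (n k : ℕ) : ℝ :=
  (n ! : ℝ) ^ 4 * ((n + k)! : ℝ) ^ 2 / (((2 * n)! : ℝ) * ((2 * n + k + 1)! : ℝ) ^ 2)

noncomputable def q (n k : ℕ) : ℝ :=
  84*(n:ℝ)^5 + 196*(n:ℝ)^4*(k:ℝ) + 304*(n:ℝ)^4 + 185*(n:ℝ)^3*(k:ℝ)^2 + 566*(n:ℝ)^3*(k:ℝ)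
  + 429*(n:ℝ)^3 + 88*(n:ℝ)^2*(k:ℝ)^3 + 399*(n:ℝ)^2*(k:ℝ)^2 + 598*(n:ℝ)^2*(k:ℝ) + 295*(n:ℝ)^2
  + 21*(n:ℝ)*(k:ℝ)^4 + 126*(n:ℝ)*(k:ℝ)^3 + 280*(n:ℝ)*(k:ℝ)^2 + 274*(n:ℝ)*(k:ℝ) + 99*(n:ℝ)
  + 2*(k:ℝ)^5 + 15*(k:ℝ)^4 + 44*(k:ℝ)^3 + 64*(k:ℝ)^2 + 46*(k:ℝ) + 13

noncomputable def G (n k : ℕ) : ℝ :=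
  q n k * (n ! : ℝ) ^ 4 * ((n + k)! : ℝ) ^ 2 /
    (2 * (2*(n:ℝ)+1) * (2*(n:ℝ)+(k:ℝ)+1) ^ 2 * (2*(n:ℝ)+(k:ℝ)+2) ^ 2 *
      ((2 * n)! : ℝ) * ((2 * n + k + 1)! : ℝ) ^ 2)

lemma q_nonneg (n k : ℕ) : 0 ≤ q n k := by unfold q; positivity

lemma F_nonneg (n k : ℕ) : 0 ≤ F n k := by unfold F; positivity

lemma G_nonneg (n k : ℕ) : 0 ≤ G n k := by
  unfold G
  have := q_nonneg n k
  positivity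

lemma wz (n k : ℕ) : F n k - F (n+1) k = G n k - G n (k+1) := by
  have e1 : ((n+1)! : ℝ) = ((n:ℝ)+1) * (n ! : ℝ) := by
    rw [Nat.factorial_succ]; push_cast; ring
  have e2 : (((n+1) + k)! : ℝ) = ((n:ℝ)+(k:ℝ)+1) * ((n+k)! : ℝ) := by
    rw [show (n+1)+k = (n+k)+1 by omega, Nat.factorial_succ]; push_cast; ring
  have e3 : ((2*(n+1))! : ℝ) = (2*(n:ℝ)+2)*(2*(n:ℝ)+1)*((2*n)! : ℝ) := by
    rw [show 2*(n+1) = (2*n+1)+1 by omega, Nat.factorial_succ, Nat.factorial_succ]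
    push_cast; ring
  have e4 : ((2*(n+1)+k+1)! : ℝ) = (2*(n:ℝ)+(k:ℝ)+3)*(2*(n:ℝ)+(k:ℝ)+2)*((2*n+k+1)! : ℝ) := by
    rw [show 2*(n+1)+k+1 = ((2*n+k+1)+1)+1 by omega, Nat.factorial_succ, Nat.factorial_succ]
    push_cast; ring
  have e5 : ((n+(k+1))! : ℝ) = ((n:ℝ)+(k:ℝ)+1) * ((n+k)! : ℝ) := by
    rw [show n+(k+1) = (n+k)+1 by omega, Nat.factorial_succ]; push_cast; ring
  have e6 : ((2*n+(k+1)+1)! : ℝ) = (2*(n:ℝ)+(k:ℝ)+2) * ((2*n+k+1)! : ℝ) := by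
    rw [show 2*n+(k+1)+1 = (2*n+k+1)+1 by omega, Nat.factorial_succ]; push_cast; ring
  have p1 : (0:ℝ) < (n ! : ℝ) := by exact_mod_cast Nat.factorial_pos n
  have p2 : (0:ℝ) < ((2*n)! : ℝ) := by exact_mod_cast Nat.factorial_pos (2*n)
  have p3 : (0:ℝ) < ((2*n+k+1)! : ℝ) := by exact_mod_cast Nat.factorial_pos (2*n+k+1)
  have p4 : (0:ℝ) < 2*(n:ℝ)+1 := by positivity
  have p5 : (0:ℝ) < 2*(n:ℝ)+(k:ℝ)+1 := by positivity
  have p6 : (0:ℝ) < 2*(n:ℝ)+(k:ℝ)+2 := by positivity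
  have p7 : (0:ℝ) < 2*(n:ℝ)+(k:ℝ)+3 := by positivity
  have p8 : (0:ℝ) < 2*(n:ℝ)+2 := by positivity
  simp only [F, G, q, e1, e2, e3, e4, e5, e6]
  push_cast
  field_simp
  ring

-- key factorial inequality
lemma natkey (n k : ℕ) : (n+k)! * ((n+1)^n * (k+1)) ≤ (2*n+k+1)! := by
  have h1 : (n+k)! * ((n+k)+1)^(n+1) ≤ ((n+k)+(n+1))! := Nat.factorial_mul_pow_le_factorial
  have h2 : (n+1)^n * (k+1) ≤ ((n+k)+1)^(n+1) := by
    have h : ((n+k)+1)^(n+1) = ((n+k)+1)^n * ((n+k)+1) := pow_succ _ _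
    rw [h]
    exact Nat.mul_le_mul (Nat.pow_le_pow_left (by omega) n) (by omega)
  calc (n+k)! * ((n+1)^n * (k+1)) ≤ (n+k)! * ((n+k)+1)^(n+1) :=
        Nat.mul_le_mul_left _ h2
    _ ≤ ((n+k)+(n+1))! := h1
    _ = (2*n+k+1)! := by congr 1; omega

lemma key (n k : ℕ) : ((n+k)! : ℝ) * (((n:ℝ)+1)^n * ((k:ℝ)+1)) ≤ ((2*n+k+1)! : ℝ) := by
  exact_mod_cast natkey n k

lemma keyweak (n k : ℕ) : ((n+k)! : ℝ) * ((k:ℝ)+1) ≤ ((2*n+k+1)! : ℝ) := by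
  have : (n+k)! * (k+1) ≤ (2*n+k+1)! := by
    calc (n+k)! * (k+1) ≤ (n+k)! * ((n+k)+1) := Nat.mul_le_mul_left _ (by omega)
      _ = ((n+k)+1)! := by rw [Nat.factorial_succ]; ring
      _ ≤ (2*n+k+1)! := Nat.factorial_le (by omega)
  exact_mod_cast this

lemma F_le (n k : ℕ) :
    F n k ≤ (n ! : ℝ)^4 / (((2*n)! : ℝ) * ((n:ℝ)+1)^(2*n)) * (1/((k:ℝ)+1)^2) := by
  have p3 : (0:ℝ) < ((2*n+k+1)! : ℝ) := by exact_mod_cast Nat.factorial_pos (2*n+k+1)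
  have hB : (0:ℝ) ≤ ((n+k)! : ℝ) := by positivity
  have hkey := key n k
  have h2 : ((n+k)! : ℝ)^2 * (((n:ℝ)+1)^(2*n) * ((k:ℝ)+1)^2) ≤ ((2*n+k+1)! : ℝ)^2 := by
    have h := mul_le_mul hkey hkey (by positivity) (by positivity)
    calc ((n+k)! : ℝ)^2 * (((n:ℝ)+1)^(2*n) * ((k:ℝ)+1)^2)
        = (((n+k)! : ℝ) * (((n:ℝ)+1)^n * ((k:ℝ)+1))) * (((n+k)! : ℝ) * (((n:ℝ)+1)^n * ((k:ℝ)+1))) := by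
          rw [two_mul, pow_add]; ring
      _ ≤ ((2*n+k+1)! : ℝ) * ((2*n+k+1)! : ℝ) := h
      _ = ((2*n+k+1)! : ℝ)^2 := (sq _).symm
  unfold F
  rw [show (n ! : ℝ)^4 / (((2*n)! : ℝ) * ((n:ℝ)+1)^(2*n)) * (1/((k:ℝ)+1)^2)
      = (n ! : ℝ)^4 * 1 / (((2*n)! : ℝ) * ((n:ℝ)+1)^(2*n) * ((k:ℝ)+1)^2) by
        field_simp,
    div_le_div_iff₀ (by positivity) (by positivity)]
  calc (n ! : ℝ)^4 * ((n+k)! : ℝ)^2 * (((2*n)! : ℝ) * ((n:ℝ)+1)^(2*n) * ((k:ℝ)+1)^2)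
      = (n ! : ℝ)^4 * (((2*n)! : ℝ)) * (((n+k)! : ℝ)^2 * (((n:ℝ)+1)^(2*n) * ((k:ℝ)+1)^2)) := by ring
    _ ≤ (n ! : ℝ)^4 * (((2*n)! : ℝ)) * ((2*n+k+1)! : ℝ)^2 := by
        have hnn : (0:ℝ) ≤ (n ! : ℝ)^4 * ((2*n)! : ℝ) := by positivity
        exact mul_le_mul_of_nonneg_left h2 hnn
    _ = (n ! : ℝ)^4 * 1 * (((2*n)! : ℝ) * ((2*n+k+1)! : ℝ)^2) := by ring

lemma hbasel : HasSum (fun k : ℕ => 1/((k:ℝ)+1)^2) (π^2/6) := by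
  have h0 := hasSum_zeta_two
  have h : HasSum (fun n : ℕ => (1:ℝ)/((n+1:ℕ):ℝ)^2) (π^2/6) := by
    refine (hasSum_nat_add_iff (f := fun n : ℕ => (1:ℝ)/(n:ℝ)^2) 1).mpr ?_
    simpa using h0
  refine h.congr_fun fun k => ?_
  push_cast
  ring

lemma F_summable (n : ℕ) : Summable (F n) := by
  refine Summable.of_nonneg_of_le (F_nonneg n) (F_le n) ?_
  exact hbasel.summable.mul_left _

lemma qbound (n k : ℕ) : q n k ≤ 4128*((n:ℝ)+1)^5*((k:ℝ)+1)^5 := by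
  have hn : (0:ℝ) ≤ (n:ℝ) := Nat.cast_nonneg n
  have hk : (0:ℝ) ≤ (k:ℝ) := Nat.cast_nonneg k
  have aux : ∀ (x:ℝ), 0 ≤ x → ∀ i, i ≤ 5 → x^i ≤ (x+1)^5 := by
    intro x hx i hi
    calc x^i ≤ (x+1)^i := pow_le_pow_left₀ hx (by linarith) i
      _ ≤ (x+1)^5 := pow_le_pow_right₀ (by linarith) hi
  have M : ∀ i j : ℕ, i ≤ 5 → j ≤ 5 → (n:ℝ)^i*(k:ℝ)^j ≤ ((n:ℝ)+1)^5*((k:ℝ)+1)^5 :=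
    fun i j hi hj => mul_le_mul (aux _ hn i hi) (aux _ hk j hj) (pow_nonneg hk j) (by positivity)
  have m50 := M 5 0 (by norm_num) (by norm_num)
  have m41 := M 4 1 (by norm_num) (by norm_num)
  have m40 := M 4 0 (by norm_num) (by norm_num)
  have m32 := M 3 2 (by norm_num) (by norm_num)
  have m31 := M 3 1 (by norm_num) (by norm_num)
  have m30 := M 3 0 (by norm_num) (by norm_num)
  have m23 := M 2 3 (by norm_num) (by norm_num)
  have m22 := M 2 2 (by norm_num) (by norm_num)
  have m21 := M 2 1 (by norm_num) (by norm_num)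
  have m20 := M 2 0 (by norm_num) (by norm_num)
  have m14 := M 1 4 (by norm_num) (by norm_num)
  have m13 := M 1 3 (by norm_num) (by norm_num)
  have m12 := M 1 2 (by norm_num) (by norm_num)
  have m11 := M 1 1 (by norm_num) (by norm_num)
  have m10 := M 1 0 (by norm_num) (by norm_num)
  have m05 := M 0 5 (by norm_num) (by norm_num)
  have m04 := M 0 4 (by norm_num) (by norm_num)
  have m03 := M 0 3 (by norm_num) (by norm_num)
  have m02 := M 0 2 (by norm_num) (by norm_num)
  have m01 := M 0 1 (by norm_num) (by norm_num)
  have m00 := M 0 0 (by norm_num) (by norm_num)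
  unfold q
  linarith [m50, m41, m40, m32, m31, m30, m23, m22, m21, m20, m14, m13, m12, m11, m10,
    m05, m04, m03, m02, m01, m00]

lemma G_le (n k : ℕ) :
    G n k ≤ (2064*((n:ℝ)+1)^5 * ((n ! : ℝ)^4/((2*n)! : ℝ))) * (1/((k:ℝ)+1)) := by
  have p2 : (0:ℝ) < ((2*n)! : ℝ) := by exact_mod_cast Nat.factorial_pos (2*n)
  have p3 : (0:ℝ) < ((2*n+k+1)! : ℝ) := by exact_mod_cast Nat.factorial_pos (2*n+k+1)
  have hn : (0:ℝ) ≤ (n:ℝ) := Nat.cast_nonneg n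
  have hk : (0:ℝ) ≤ (k:ℝ) := Nat.cast_nonneg k
  have hGdecomp : G n k = q n k / (2 * (2*(n:ℝ)+1) * (2*(n:ℝ)+(k:ℝ)+1)^2 * (2*(n:ℝ)+(k:ℝ)+2)^2)
      * ((n ! : ℝ)^4/((2*n)! : ℝ)) * (((n+k)! : ℝ)/((2*n+k+1)! : ℝ))^2 := by
    unfold G
    have d1 : (2*(n:ℝ)+1) ≠ 0 := by positivity
    have d2 : (2*(n:ℝ)+(k:ℝ)+1) ≠ 0 := by positivity
    have d3 : (2*(n:ℝ)+(k:ℝ)+2) ≠ 0 := by positivity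
    have d4 : ((2*n)! : ℝ) ≠ 0 := ne_of_gt p2
    have d5 : ((2*n+k+1)! : ℝ) ≠ 0 := ne_of_gt p3
    field_simp
  have b1 : q n k / (2 * (2*(n:ℝ)+1) * (2*(n:ℝ)+(k:ℝ)+1)^2 * (2*(n:ℝ)+(k:ℝ)+2)^2)
      ≤ 2064*((n:ℝ)+1)^5*((k:ℝ)+1) := by
    rw [div_le_iff₀ (by positivity)]
    calc q n k ≤ 4128*((n:ℝ)+1)^5*((k:ℝ)+1)^5 := qbound n k
      _ = (2064*((n:ℝ)+1)^5*((k:ℝ)+1)) * (2 * 1 * ((k:ℝ)+1)^2 * ((k:ℝ)+1)^2) := by ring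
      _ ≤ (2064*((n:ℝ)+1)^5*((k:ℝ)+1)) *
          (2 * (2*(n:ℝ)+1) * (2*(n:ℝ)+(k:ℝ)+1)^2 * (2*(n:ℝ)+(k:ℝ)+2)^2) := by
        have h1 : (1:ℝ) ≤ 2*(n:ℝ)+1 := by linarith
        have h2 : ((k:ℝ)+1) ≤ 2*(n:ℝ)+(k:ℝ)+1 := by linarith
        have h3 : ((k:ℝ)+1) ≤ 2*(n:ℝ)+(k:ℝ)+2 := by linarith
        have hkk : (0:ℝ) ≤ (k:ℝ)+1 := by linarith
        gcongr
  have b3 : ((n+k)! : ℝ)/((2*n+k+1)! : ℝ) ≤ 1/((k:ℝ)+1) := by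
    rw [div_le_div_iff₀ p3 (by positivity)]
    simpa [mul_comm] using keyweak n k
  have b3' : (((n+k)! : ℝ)/((2*n+k+1)! : ℝ))^2 ≤ (1/((k:ℝ)+1))^2 :=
    pow_le_pow_left₀ (by positivity) b3 2
  rw [hGdecomp]
  calc q n k / (2 * (2*(n:ℝ)+1) * (2*(n:ℝ)+(k:ℝ)+1)^2 * (2*(n:ℝ)+(k:ℝ)+2)^2)
        * ((n ! : ℝ)^4/((2*n)! : ℝ)) * (((n+k)! : ℝ)/((2*n+k+1)! : ℝ))^2
      ≤ (2064*((n:ℝ)+1)^5*((k:ℝ)+1)) * ((n ! : ℝ)^4/((2*n)! : ℝ)) * (1/((k:ℝ)+1))^2 := by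
        refine mul_le_mul (mul_le_mul_of_nonneg_right b1 (by positivity)) b3' (by positivity) ?_
        positivity
    _ = (2064*((n:ℝ)+1)^5 * ((n ! : ℝ)^4/((2*n)! : ℝ))) * (1/((k:ℝ)+1)) := by
        have : ((k:ℝ)+1) ≠ 0 := by positivity
        field_simp

lemma G_tendsto (n : ℕ) : Tendsto (fun k => G n k) atTop (𝓝 0) := by
  refine squeeze_zero (fun k => G_nonneg n k) (fun k => G_le n k) ?_
  have h := tendsto_one_div_add_atTop_nhds_zero_nat.const_mul
    (2064*((n:ℝ)+1)^5 * ((n ! : ℝ)^4/((2*n)! : ℝ)))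
  simpa using h

noncomputable def S (n : ℕ) : ℝ := ∑' k, F n k

lemma hS (n : ℕ) : HasSum (F n) (S n) := (F_summable n).hasSum

lemma step (n : ℕ) : S n - S (n+1) = G n 0 := by
  have hsum : HasSum (fun k => F n k - F (n+1) k) (S n - S (n+1)) := (hS n).sub (hS (n+1))
  have h1 : Tendsto (fun m => ∑ k ∈ range m, (F n k - F (n+1) k)) atTop
      (𝓝 (S n - S (n+1))) := hsum.tendsto_sum_nat
  have hps : ∀ m, ∑ k ∈ range m, (F n k - F (n+1) k) = G n 0 - G n m := by
    intro m
    calc ∑ k ∈ range m, (F n k - F (n+1) k) = ∑ k ∈ range m, (G n k - G n (k+1)) :=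
          sum_congr rfl fun k _ => wz n k
      _ = G n 0 - G n m := sum_range_sub' (G n) m
  have h2 : Tendsto (fun m => ∑ k ∈ range m, (F n k - F (n+1) k)) atTop (𝓝 (G n 0)) := by
    have h3 : Tendsto (fun m => G n 0 - G n m) atTop (𝓝 (G n 0 - 0)) :=
      tendsto_const_nhds.sub (G_tendsto n)
    rw [sub_zero] at h3
    exact h3.congr fun m => (hps m).symm
  exact tendsto_nhds_unique h1 h2

lemma F0 (k : ℕ) : F 0 k = 1/((k:ℝ)+1)^2 := by
  unfold F
  simp only [show 2*(0:ℕ) = 0 from by omega, show (0:ℕ)+k = k from by omega,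
    Nat.factorial_succ, Nat.factorial_zero]
  have hk : ((k)! : ℝ) ≠ 0 := by
    have : (0:ℝ) < ((k)! : ℝ) := by exact_mod_cast Nat.factorial_pos k
    linarith
  push_cast
  field_simp

lemma S_zero : S 0 = π^2/6 := by
  have hfun : F 0 = fun k : ℕ => 1/((k:ℝ)+1)^2 := funext F0
  unfold S
  rw [hfun]
  exact hbasel.tsum_eq

lemma S_nonneg (n : ℕ) : 0 ≤ S n := tsum_nonneg (F_nonneg n)

lemma natc (n : ℕ) : n !^4 * 4^n ≤ (2*n+1) * ((2*n)! * (n+1)^(2*n)) := by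
  have hA : n ! ≤ (n+1)^n := le_trans (Nat.factorial_le_pow n) (Nat.pow_le_pow_left (Nat.le_succ n) n)
  have hA2 : n !^2 ≤ (n+1)^(2*n) := by
    rw [two_mul, pow_add, sq]
    exact Nat.mul_le_mul hA hA
  have hB : 4^n * (n ! * n !) ≤ (2*n+1) * (2*n)! := by
    have h4 : 4^n ≤ (2*n+1) * Nat.choose (2*n) n :=
      Nat.four_pow_le_two_mul_add_one_mul_central_binom n
    have hc : Nat.choose (2*n) n * n ! * n ! = (2*n)! := by
      have h := Nat.choose_mul_factorial_mul_factorial (show n ≤ 2*n by omega)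
      simpa [show 2*n - n = n by omega] using h
    calc 4^n * (n ! * n !) ≤ ((2*n+1) * Nat.choose (2*n) n) * (n ! * n !) :=
          Nat.mul_le_mul_right _ h4
      _ = (2*n+1) * (Nat.choose (2*n) n * n ! * n !) := by ring
      _ = (2*n+1) * (2*n)! := by rw [hc]
  calc n !^4 * 4^n = (4^n * (n ! * n !)) * n !^2 := by ring
    _ ≤ ((2*n+1) * (2*n)!) * (n+1)^(2*n) := Nat.mul_le_mul hB hA2
    _ = (2*n+1) * ((2*n)! * (n+1)^(2*n)) := by ring

lemma S_le (n : ℕ) : S n ≤ ((2*(n:ℝ)+1)/4^n) * (π^2/6) := by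
  have p2 : (0:ℝ) < ((2*n)! : ℝ) := by exact_mod_cast Nat.factorial_pos (2*n)
  have h1 : S n ≤ ((n ! : ℝ)^4 / (((2*n)! : ℝ) * ((n:ℝ)+1)^(2*n))) * (π^2/6) := by
    have ht := Summable.tsum_le_tsum (F_le n) (F_summable n) (hbasel.summable.mul_left
      ((n ! : ℝ)^4 / (((2*n)! : ℝ) * ((n:ℝ)+1)^(2*n))))
    calc S n ≤ ∑' k : ℕ, (n ! : ℝ)^4 / (((2*n)! : ℝ) * ((n:ℝ)+1)^(2*n)) * (1/((k:ℝ)+1)^2) := ht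
      _ = ((n ! : ℝ)^4 / (((2*n)! : ℝ) * ((n:ℝ)+1)^(2*n))) * (π^2/6) :=
          (hbasel.mul_left _).tsum_eq
  have h2 : (n ! : ℝ)^4 / (((2*n)! : ℝ) * ((n:ℝ)+1)^(2*n)) ≤ (2*(n:ℝ)+1)/4^n := by
    rw [div_le_div_iff₀ (by positivity) (by positivity)]
    have := natc n
    have hcast : ((n !:ℕ):ℝ)^4 * 4^n ≤ (2*(n:ℝ)+1) * (((2*n)! : ℝ) * ((n:ℝ)+1)^(2*n)) := by
      exact_mod_cast this
    linarith
  calc S n ≤ ((n ! : ℝ)^4 / (((2*n)! : ℝ) * ((n:ℝ)+1)^(2*n))) * (π^2/6) := h1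
    _ ≤ ((2*(n:ℝ)+1)/4^n) * (π^2/6) := by
        refine mul_le_mul_of_nonneg_right h2 (by positivity)

lemma S_tendsto : Tendsto S atTop (𝓝 0) := by
  refine squeeze_zero S_nonneg S_le ?_
  have h1 : Tendsto (fun n : ℕ => (n:ℝ)*(1/4:ℝ)^n) atTop (𝓝 0) := by
    have hs := summable_pow_mul_geometric_of_norm_lt_one (R := ℝ) 1 (r := 1/4) (by norm_num)
    have h := hs.tendsto_atTop_zero
    refine h.congr fun n => ?_
    simp
  have h2 : Tendsto (fun n : ℕ => ((1:ℝ)/4)^n) atTop (𝓝 0) :=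
    tendsto_pow_atTop_nhds_zero_of_lt_one (by norm_num) (by norm_num)
  have h3 := (h1.const_mul (2:ℝ)).add h2
  rw [mul_zero, add_zero] at h3
  have h4 : Tendsto (fun n : ℕ => (2*(n:ℝ)+1)/4^n) atTop (𝓝 0) := by
    refine h3.congr fun n => ?_
    have h4n : ((4:ℝ)^n) ≠ 0 := by positivity
    field_simp
    rw [← mul_pow]; norm_num
  have h5 := h4.mul_const (π^2/6)
  rw [zero_mul] at h5
  exact h5

lemma hasSumG : HasSum (fun n => G n 0) (π^2/6) := by
  rw [hasSum_iff_tendsto_nat_of_nonneg (fun n => G_nonneg n 0)]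
  have hpart : ∀ N, ∑ m ∈ range N, G m 0 = S 0 - S N := by
    intro N
    calc ∑ m ∈ range N, G m 0 = ∑ m ∈ range N, (S m - S (m+1)) :=
          sum_congr rfl fun m _ => (step m).symm
      _ = S 0 - S N := sum_range_sub' S N
  have h : Tendsto (fun N => S 0 - S N) atTop (𝓝 (S 0 - 0)) :=
    tendsto_const_nhds.sub S_tendsto
  rw [sub_zero] at h
  rw [← S_zero]
  exact h.congr fun N => (hpart N).symm

lemma G0_eq (n : ℕ) : G n 0 =
    (21 * ((n + 1 : ℕ) : ℝ) - 8) /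
      (((n + 1 : ℕ) : ℝ) ^ 3 * (Nat.choose (2 * (n + 1)) (n + 1) : ℝ) ^ 3) := by
  have p1 : (0:ℝ) < (n ! : ℝ) := by exact_mod_cast Nat.factorial_pos n
  have p2 : (0:ℝ) < ((2*n)! : ℝ) := by exact_mod_cast Nat.factorial_pos (2*n)
  have hcnat : Nat.choose (2*(n+1)) (n+1) * (n+1)! * (n+1)! = (2*(n+1))! := by
    have h := Nat.choose_mul_factorial_mul_factorial (show n+1 ≤ 2*(n+1) by omega)
    simpa [show 2*(n+1) - (n+1) = n+1 by omega] using h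
  have hc : ((Nat.choose (2*(n+1)) (n+1)) : ℝ) * (((n+1)! : ℝ) * ((n+1)! : ℝ)) = ((2*(n+1))! : ℝ) := by
    exact_mod_cast (by rw [← hcnat]; ring : Nat.choose (2*(n+1)) (n+1) * ((n+1)! * (n+1)!) = (2*(n+1))!)
  have e1 : ((n+1)! : ℝ) = ((n:ℝ)+1) * (n ! : ℝ) := by
    rw [Nat.factorial_succ]; push_cast; ring
  have e3 : ((2*(n+1))! : ℝ) = (2*(n:ℝ)+2)*(2*(n:ℝ)+1)*((2*n)! : ℝ) := by
    rw [show 2*(n+1) = (2*n+1)+1 by omega, Nat.factorial_succ, Nat.factorial_succ]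
    push_cast; ring
  have hchoose : ((Nat.choose (2*(n+1)) (n+1)) : ℝ) =
      (2*(n:ℝ)+2)*(2*(n:ℝ)+1)*((2*n)! : ℝ) / ((((n:ℝ)+1) * (n ! : ℝ))^2) := by
    rw [eq_div_iff (by positivity)]
    rw [← e3, ← hc, e1]
    ring
  unfold G q
  rw [show n + 0 = n by omega, show 2*n+0+1 = 2*n+1 by omega]
  rw [show ((2*n+1)! : ℝ) = (2*(n:ℝ)+1)*((2*n)! : ℝ) by
    rw [Nat.factorial_succ]; push_cast; ring]
  rw [hchoose]
  push_cast
  field_simp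
  ring

end ZWZ

open ZWZ in
theorem stmt_7 :
    HasSum (fun k : ℕ =>
      (21 * ((k + 1 : ℕ) : ℝ) - 8) /
        (((k + 1 : ℕ) : ℝ) ^ 3 * (Nat.choose (2 * (k + 1)) (k + 1) : ℝ) ^ 3))
      (π ^ 2 / 6) := by
  have hfun : (fun k : ℕ =>
      (21 * ((k + 1 : ℕ) : ℝ) - 8) /
        (((k + 1 : ℕ) : ℝ) ^ 3 * (Nat.choose (2 * (k + 1)) (k + 1) : ℝ) ^ 3))
      = fun n : ℕ => G n 0 := funext fun n => (G0_eq n).symm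
  rw [hfun]
  exact hasSumG
end

section
/- For every real number x with -2 \le x \le 2, one has (\arcsin(x/2))^4 = \frac{3}{2} \sum_{k=1}^{\infty} \frac{H_{k-1}^{(2)}}{k^2 \binom{2k}{k}} x^{2k}, where H_n^{(2)} = \sum_{j=1}^{n} 1/j^2. -/
/-- The `n`-th harmonic number of order 2: `H_n^{(2)} = ∑_{j=1}^n 1/j^2`. -/
noncomputable def harmonic2 (n : ℕ) : ℝ := ∑ j ∈ Finset.range n, 1 / ((j : ℝ) + 1) ^ 2

namespace ArcsinQuartic

open Real Set Filter Topology

noncomputable def Cc (k : ℕ) : ℝ := ((2 * (k + 1)).choose (k + 1) : ℝ)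

lemma Cc_pos (k : ℕ) : 0 < Cc k := by
  have := Nat.centralBinom_pos (k + 1)
  unfold Cc
  rw [show (2 * (k + 1)).choose (k + 1) = Nat.centralBinom (k + 1) from rfl]
  exact_mod_cast this

lemma Cc_rec (k : ℕ) : ((k : ℝ) + 2) * Cc (k + 1) = 2 * (2 * (k : ℝ) + 3) * Cc k := by
  have h := Nat.succ_mul_centralBinom_succ (k + 1)
  have h' : ((k + 1 + 1) * Nat.centralBinom (k + 1 + 1) : ℝ)
      = (2 * (2 * (k + 1) + 1) * Nat.centralBinom (k + 1) : ℝ) := by exact_mod_cast h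
  unfold Cc
  rw [show (2 * (k + 1 + 1)).choose (k + 1 + 1) = Nat.centralBinom (k + 1 + 1) from rfl,
    show (2 * (k + 1)).choose (k + 1) = Nat.centralBinom (k + 1) from rfl]
  push_cast at h' ⊢
  linarith

lemma Cc_ge (k : ℕ) : (4 : ℝ) ^ (k + 1) ≤ 2 * ((k : ℝ) + 1) * Cc k := by
  have h := Nat.four_pow_le_two_mul_self_mul_centralBinom (k + 1) k.succ_pos
  unfold Cc
  rw [show (2 * (k + 1)).choose (k + 1) = Nat.centralBinom (k + 1) from rfl]
  exact_mod_cast h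

lemma summable_aux {q : ℝ} (hq0 : 0 < q) (hq : q < 1) :
    Summable (fun k : ℕ => ((k : ℝ) + 1) ^ 3 * q ^ k) := by
  have h : Summable (fun n : ℕ => ((n : ℝ)) ^ 3 * q ^ n) :=
    summable_pow_mul_geometric_of_norm_lt_one 3
      (by rwa [Real.norm_eq_abs, abs_of_nonneg hq0.le])
  have h2 : Summable (fun n : ℕ => (((n + 1 : ℕ) : ℝ)) ^ 3 * q ^ (n + 1)) :=
    (summable_nat_add_iff 1).2 h
  have h3 := h2.mul_left (1 / q)
  refine h3.congr fun k => ?_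
  push_cast
  field_simp
  ring

lemma summable_master (c : ℕ → ℝ) (m : ℕ → ℕ) (B : ℝ)
    (hc : ∀ k, |c k| ≤ B * ((k : ℝ) + 1) ^ 2 / 4 ^ k) (hm : ∀ k, m k ≤ 2 * k + 2)
    {x : ℝ} (hx : |x| < 2) : Summable (fun k => c k * x ^ (m k)) := by
  set r : ℝ := max |x| 1 with hr
  have hr1 : (1 : ℝ) ≤ r := le_max_right _ _
  have hr0 : (0 : ℝ) < r := lt_of_lt_of_le one_pos hr1
  have hrx : |x| ≤ r := le_max_left _ _
  have hr2 : r < 2 := max_lt hx one_lt_two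
  have hq0 : (0 : ℝ) < r ^ 2 / 4 := by positivity
  have hq1 : r ^ 2 / 4 < 1 := by nlinarith
  have hB : 0 ≤ B := by
    have := hc 0
    have h0 : (0:ℝ) ≤ |c 0| := abs_nonneg _
    simp at this
    linarith
  refine Summable.of_norm_bounded
    (((summable_aux hq0 hq1).mul_left (B * r ^ 2))) (fun k => ?_)
  have hxk : |x| ^ (m k) ≤ r ^ (2 * k + 2) := by
    calc |x| ^ (m k) ≤ r ^ (m k) := pow_le_pow_left₀ (abs_nonneg x) hrx _
    _ ≤ r ^ (2 * k + 2) := pow_le_pow_right₀ hr1 (hm k)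
  calc ‖c k * x ^ (m k)‖ = |c k| * |x| ^ (m k) := by
        rw [Real.norm_eq_abs, abs_mul, abs_pow]
  _ ≤ (B * ((k : ℝ) + 1) ^ 2 / 4 ^ k) * r ^ (2 * k + 2) := by
        apply mul_le_mul (hc k) hxk (by positivity)
        positivity
  _ ≤ (B * r ^ 2) * (((k : ℝ) + 1) ^ 3 * (r ^ 2 / 4) ^ k) := by
        rw [div_pow, pow_add, pow_mul,
          show B * ((k:ℝ) + 1) ^ 2 / 4 ^ k * ((r ^ 2) ^ k * r ^ 2)
            = (B * r ^ 2) * (((k:ℝ) + 1) ^ 2 * ((r ^ 2) ^ k / 4 ^ k)) from by ring]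
        have h2 : ((k:ℝ)+1)^2 ≤ ((k:ℝ)+1)^3 := by
          nlinarith [mul_nonneg (sq_nonneg ((k:ℝ)+1)) (Nat.cast_nonneg k : (0:ℝ) ≤ (k:ℝ))]
        gcongr

lemma hasDerivAt_master (c : ℕ → ℝ) (m : ℕ → ℕ) (B : ℝ)
    (hc : ∀ k, |c k| ≤ B * ((k : ℝ) + 1) ^ 2 / 4 ^ k) (hm : ∀ k, m k ≤ 2 * k + 2)
    {x : ℝ} (hx : |x| < 2) :
    HasDerivAt (fun y => ∑' k, c k * y ^ (m k))
      (∑' k, c k * (m k) * x ^ (m k - 1)) x := by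
  have habs := abs_nonneg x
  set r : ℝ := (|x| + 2) / 2 with hr
  have hr1 : (1:ℝ) ≤ r := by rw [hr]; linarith
  have hr2 : r < 2 := by rw [hr]; linarith
  have hxr : |x| < r := by rw [hr]; linarith
  have hr0 : (0:ℝ) < r := by linarith
  have hq0 : (0:ℝ) < r ^ 2 / 4 := by positivity
  have hq1 : r ^ 2 / 4 < 1 := by nlinarith
  clear_value r
  clear hr
  have hB : 0 ≤ B := by
    have := hc 0
    have h0 : (0:ℝ) ≤ |c 0| := abs_nonneg _
    simp at this
    linarith
  have hs : IsOpen (Ioo (-r) r) := isOpen_Ioo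
  have h's : IsPreconnected (Ioo (-r) r) := (convex_Ioo _ _).isPreconnected
  have hx0 : (0:ℝ) ∈ Ioo (-r) r := by rw [mem_Ioo]; constructor <;> linarith
  have hxs : x ∈ Ioo (-r) r := by rw [mem_Ioo, ← abs_lt]; exact hxr
  have hderiv : ∀ (k : ℕ) (y : ℝ), y ∈ Ioo (-r) r →
      HasDerivAt (fun z => c k * z ^ (m k)) (c k * ((m k) * y ^ (m k - 1))) y :=
    fun k y _ => (hasDerivAt_pow (m k) y).const_mul (c k)
  have hbound : ∀ (k : ℕ) (y : ℝ), y ∈ Ioo (-r) r →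
      ‖c k * ((m k) * y ^ (m k - 1))‖ ≤ (2 * B * r) * (((k:ℝ)+1) ^ 3 * (r ^ 2 / 4) ^ k) := by
    intro k y hy
    have hyr : |y| ≤ r := by
      rw [mem_Ioo, ← abs_lt] at hy; exact hy.le
    have h1 : |y| ^ (m k - 1) ≤ r ^ (2 * k + 1) := by
      calc |y| ^ (m k - 1) ≤ r ^ (m k - 1) := pow_le_pow_left₀ (abs_nonneg y) hyr _
      _ ≤ r ^ (2 * k + 1) := pow_le_pow_right₀ hr1 (by have := hm k; omega)
    have h3 : ((m k : ℕ) : ℝ) ≤ 2 * ((k:ℝ) + 1) := by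
      have := hm k
      calc ((m k : ℕ) : ℝ) ≤ ((2 * k + 2 : ℕ) : ℝ) := by exact_mod_cast this
      _ = 2 * ((k:ℝ) + 1) := by push_cast; ring
    calc ‖c k * ((m k) * y ^ (m k - 1))‖ = |c k| * ((m k : ℝ) * |y| ^ (m k - 1)) := by
          rw [Real.norm_eq_abs, abs_mul, abs_mul, abs_pow, Nat.abs_cast]
    _ ≤ (B * ((k:ℝ)+1) ^ 2 / 4 ^ k) * ((2 * ((k:ℝ)+1)) * r ^ (2 * k + 1)) := by
          apply mul_le_mul (hc k) (mul_le_mul h3 h1 (by positivity) (by positivity))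
            (by positivity) (by positivity)
    _ = (2 * B * r) * (((k:ℝ)+1) ^ 3 * (r ^ 2 / 4) ^ k) := by
          rw [div_pow]
          field_simp
          ring
  have hsum0 : Summable (fun k => c k * (0:ℝ) ^ (m k)) := by
    refine Summable.of_norm_bounded
      ((summable_aux (q := 1/4) (by norm_num) (by norm_num)).mul_left B) (fun k => ?_)
    have h0 : |(0:ℝ) ^ (m k)| ≤ 1 := by
      rcases Nat.eq_zero_or_pos (m k) with h | h
      · simp [h]
      · rw [zero_pow (by omega)]; norm_num
    calc ‖c k * (0:ℝ) ^ (m k)‖ = |c k| * |(0:ℝ) ^ (m k)| := abs_mul _ _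
    _ ≤ (B * ((k:ℝ)+1) ^ 2 / 4 ^ k) * 1 := mul_le_mul (hc k) h0 (abs_nonneg _) (by positivity)
    _ ≤ B * (((k:ℝ)+1) ^ 3 * (1/4 : ℝ) ^ k) := by
          rw [mul_one, show B * (((k:ℝ)+1) ^ 3 * (1/4 : ℝ) ^ k)
            = B * ((k:ℝ)+1) ^ 3 / 4 ^ k from by rw [div_pow, one_pow]; ring,
            show B * ((k:ℝ)+1) ^ 2 / 4 ^ k = B * ((k:ℝ)+1) ^ 2 / 4 ^ k from rfl]
          have h2 : ((k:ℝ)+1)^2 ≤ ((k:ℝ)+1)^3 := by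
            nlinarith [mul_nonneg (sq_nonneg ((k:ℝ)+1)) (Nat.cast_nonneg k : (0:ℝ) ≤ (k:ℝ))]
          gcongr
  have key := hasDerivAt_tsum_of_isPreconnected
    ((summable_aux hq0 hq1).mul_left (2 * B * r)) hs h's hderiv hbound hx0 hsum0 hxs
  have e : ∑' k, c k * ((m k) * x ^ (m k - 1)) = ∑' k, c k * (m k) * x ^ (m k - 1) :=
    tsum_congr fun k => (mul_assoc _ _ _).symm
  rwa [e] at key

lemma harmonic2_nonneg (k : ℕ) : 0 ≤ harmonic2 k :=
  Finset.sum_nonneg fun j _ => by positivity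

lemma harmonic2_succ (k : ℕ) : harmonic2 (k + 1) = harmonic2 k + 1 / ((k : ℝ) + 1) ^ 2 :=
  Finset.sum_range_succ _ k

lemma harmonic2_le_two (k : ℕ) : harmonic2 k ≤ 2 := by
  have key : ∀ n : ℕ, harmonic2 n ≤ 2 - 2 / ((n : ℝ) + 1) := by
    intro n
    induction n with
    | zero => simp [harmonic2]
    | succ m ih =>
      rw [harmonic2_succ]
      have h1 : (0:ℝ) < (m:ℝ) + 1 := by positivity
      have h2 : (0:ℝ) < (m:ℝ) + 2 := by positivity
      have key2 : 2 - 2 / ((m:ℝ) + 1 + 1) - (2 - 2 / ((m:ℝ) + 1) + 1 / ((m:ℝ) + 1) ^ 2)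
          = (m:ℝ) / (((m:ℝ) + 1) ^ 2 * ((m:ℝ) + 2)) := by
        field_simp
        ring
      have h3 : (0:ℝ) ≤ (m:ℝ) / (((m:ℝ) + 1) ^ 2 * ((m:ℝ) + 2)) := by positivity
      push_cast
      linarith
  have h := key k
  have h1 : (0:ℝ) < (k:ℝ) + 1 := by positivity
  have : 0 ≤ 2 / ((k:ℝ) + 1) := by positivity
  linarith

noncomputable def a2 (k : ℕ) : ℝ := 1 / (((k:ℝ) + 1) ^ 2 * Cc k)
noncomputable def b2 (k : ℕ) : ℝ := 2 / (((k:ℝ) + 1) * Cc k)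
noncomputable def c2 (k : ℕ) : ℝ := (2 * (2 * (k:ℝ) + 1)) / (((k:ℝ) + 1) * Cc k)
noncomputable def a4 (k : ℕ) : ℝ := (3/2) * harmonic2 k / (((k:ℝ) + 1) ^ 2 * Cc k)
noncomputable def b4 (k : ℕ) : ℝ := 3 * harmonic2 k / (((k:ℝ) + 1) * Cc k)
noncomputable def c4 (k : ℕ) : ℝ := (3 * harmonic2 k * (2 * (k:ℝ) + 1)) / (((k:ℝ) + 1) * Cc k)

lemma coef_bound {k : ℕ} {N D B : ℝ} (hN : 0 ≤ N) (hD : 0 < D) (hB : 0 ≤ B)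
    (h : N ≤ 2 * B * D * ((k:ℝ) + 1)) : N / (D * Cc k) ≤ B * ((k:ℝ) + 1) ^ 2 / 4 ^ k := by
  have hC := Cc_pos k
  have hG := Cc_ge k
  rw [div_le_div_iff₀ (by positivity) (by positivity)]
  have h2 : (4:ℝ) ^ k ≤ ((k:ℝ) + 1) * Cc k / 2 := by
    rw [le_div_iff₀ (by norm_num)]
    have : (4:ℝ) ^ (k+1) = 4 ^ k * 4 := pow_succ 4 k
    linarith
  have hk1 : (0:ℝ) ≤ ((k:ℝ) + 1) * Cc k / 2 := by positivity
  calc N * 4 ^ k ≤ N * (((k:ℝ) + 1) * Cc k / 2) := mul_le_mul_of_nonneg_left h2 hN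
  _ ≤ (2 * B * D * ((k:ℝ) + 1)) * (((k:ℝ) + 1) * Cc k / 2) := mul_le_mul_of_nonneg_right h hk1
  _ = B * ((k:ℝ) + 1) ^ 2 * (D * Cc k) := by ring

lemma a2_pos (k : ℕ) : 0 < a2 k := div_pos one_pos (mul_pos (by positivity) (Cc_pos k))
lemma b2_pos (k : ℕ) : 0 < b2 k := div_pos (by norm_num) (mul_pos (by positivity) (Cc_pos k))
lemma c2_pos (k : ℕ) : 0 < c2 k := div_pos (by positivity) (mul_pos (by positivity) (Cc_pos k))
lemma a4_nonneg (k : ℕ) : 0 ≤ a4 k :=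
  div_nonneg (by nlinarith [harmonic2_nonneg k]) (le_of_lt (mul_pos (by positivity) (Cc_pos k)))
lemma b4_nonneg (k : ℕ) : 0 ≤ b4 k :=
  div_nonneg (by nlinarith [harmonic2_nonneg k]) (le_of_lt (mul_pos (by positivity) (Cc_pos k)))
lemma c4_nonneg (k : ℕ) : 0 ≤ c4 k := by
  apply div_nonneg _ (le_of_lt (mul_pos (by positivity) (Cc_pos k)))
  have := harmonic2_nonneg k
  positivity

lemma a2_bd (k : ℕ) : |a2 k| ≤ 1 * ((k:ℝ) + 1) ^ 2 / 4 ^ k := by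
  rw [abs_of_nonneg (a2_pos k).le]
  exact coef_bound zero_le_one (by positivity) zero_le_one (by nlinarith [(Nat.cast_nonneg k : (0:ℝ) ≤ (k:ℝ))])
lemma b2_bd (k : ℕ) : |b2 k| ≤ 1 * ((k:ℝ) + 1) ^ 2 / 4 ^ k := by
  rw [abs_of_nonneg (b2_pos k).le]
  exact coef_bound (by norm_num) (by positivity) zero_le_one (by nlinarith [(Nat.cast_nonneg k : (0:ℝ) ≤ (k:ℝ))])
lemma c2_bd (k : ℕ) : |c2 k| ≤ 2 * ((k:ℝ) + 1) ^ 2 / 4 ^ k := by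
  rw [abs_of_nonneg (c2_pos k).le]
  exact coef_bound (by positivity) (by positivity) (by norm_num)
    (by nlinarith [(Nat.cast_nonneg k : (0:ℝ) ≤ (k:ℝ))])
lemma a4_bd (k : ℕ) : |a4 k| ≤ 3 * ((k:ℝ) + 1) ^ 2 / 4 ^ k := by
  rw [abs_of_nonneg (a4_nonneg k)]
  refine coef_bound (by nlinarith [harmonic2_nonneg k]) (by positivity) (by norm_num) ?_
  nlinarith [(Nat.cast_nonneg k : (0:ℝ) ≤ (k:ℝ)), harmonic2_le_two k, harmonic2_nonneg k,
    sq_nonneg ((k:ℝ)+1), mul_nonneg (sq_nonneg ((k:ℝ)+1)) ((Nat.cast_nonneg k : (0:ℝ) ≤ (k:ℝ)))]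
lemma b4_bd (k : ℕ) : |b4 k| ≤ 3 * ((k:ℝ) + 1) ^ 2 / 4 ^ k := by
  rw [abs_of_nonneg (b4_nonneg k)]
  refine coef_bound (by nlinarith [harmonic2_nonneg k]) (by positivity) (by norm_num) ?_
  nlinarith [(Nat.cast_nonneg k : (0:ℝ) ≤ (k:ℝ)), harmonic2_le_two k, harmonic2_nonneg k,
    sq_nonneg ((k:ℝ))]
lemma c4_bd (k : ℕ) : |c4 k| ≤ 6 * ((k:ℝ) + 1) ^ 2 / 4 ^ k := by
  rw [abs_of_nonneg (c4_nonneg k)]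
  refine coef_bound ?_ (by positivity) (by norm_num) ?_
  · have := harmonic2_nonneg k; positivity
  · nlinarith [(Nat.cast_nonneg k : (0:ℝ) ≤ (k:ℝ)), harmonic2_le_two k, harmonic2_nonneg k,
      sq_nonneg ((k:ℝ)), mul_nonneg ((Nat.cast_nonneg k : (0:ℝ) ≤ (k:ℝ))) (harmonic2_nonneg k),
      mul_le_mul_of_nonneg_right (harmonic2_le_two k) (by positivity : (0:ℝ) ≤ 2*(k:ℝ)+1)]

lemma I2 (k : ℕ) : 4 * c2 (k + 1) = c2 k + b2 k := by
  have h1 : Cc k ≠ 0 := (Cc_pos k).ne'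
  have h2 : Cc (k+1) ≠ 0 := (Cc_pos (k+1)).ne'
  have hCk1 : Cc (k + 1) = 2 * (2 * (k:ℝ) + 3) * Cc k / ((k:ℝ) + 2) := by
    rw [eq_div_iff (by positivity)]
    linarith [Cc_rec k]
  unfold c2 b2
  rw [hCk1]
  have hk2 : ((k:ℝ) + 2) ≠ 0 := by positivity
  have hk1 : ((k:ℝ) + 1) ≠ 0 := by positivity
  have hk3 : (2 * (k:ℝ) + 3) ≠ 0 := by positivity
  push_cast
  field_simp
  ring

lemma I4 (k : ℕ) : 4 * c4 (k + 1) = c4 k + b4 k + 6 * a2 k := by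
  have h1 : Cc k ≠ 0 := (Cc_pos k).ne'
  have hCk1 : Cc (k + 1) = 2 * (2 * (k:ℝ) + 3) * Cc k / ((k:ℝ) + 2) := by
    rw [eq_div_iff (by positivity)]
    linarith [Cc_rec k]
  unfold c4 b4 a2
  rw [hCk1, harmonic2_succ]
  have hk2 : ((k:ℝ) + 2) ≠ 0 := by positivity
  have hk1 : ((k:ℝ) + 1) ≠ 0 := by positivity
  have hk3 : (2 * (k:ℝ) + 3) ≠ 0 := by positivity
  push_cast
  field_simp
  ring


noncomputable def F2 (x : ℝ) : ℝ := ∑' k, a2 k * x ^ (2 * k + 2)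
noncomputable def G2 (x : ℝ) : ℝ := ∑' k, b2 k * x ^ (2 * k + 1)
noncomputable def Hh2 (x : ℝ) : ℝ := ∑' k, c2 k * x ^ (2 * k)
noncomputable def F4 (x : ℝ) : ℝ := ∑' k, a4 k * x ^ (2 * k + 2)
noncomputable def G4 (x : ℝ) : ℝ := ∑' k, b4 k * x ^ (2 * k + 1)
noncomputable def Hh4 (x : ℝ) : ℝ := ∑' k, c4 k * x ^ (2 * k)

lemma bd_shift {c : ℕ → ℝ} {B : ℝ} (hB : 0 ≤ B)
    (h : ∀ k, |c k| ≤ B * ((k:ℝ) + 1) ^ 2 / 4 ^ k) :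
    ∀ k, |c (k + 1)| ≤ B * ((k:ℝ) + 1) ^ 2 / 4 ^ k := by
  intro k
  have h1 := h (k + 1)
  have e : ((k + 1 : ℕ) : ℝ) = (k : ℝ) + 1 := by push_cast; ring
  rw [e] at h1
  refine h1.trans ?_
  rw [div_le_div_iff₀ (by positivity) (by positivity)]
  have h2 : ((k:ℝ) + 1 + 1) ^ 2 ≤ 4 * ((k:ℝ) + 1) ^ 2 := by
    nlinarith [(Nat.cast_nonneg k : (0:ℝ) ≤ (k:ℝ))]
  have h3 : (4:ℝ) ^ (k + 1) = 4 ^ k * 4 := pow_succ 4 k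
  rw [h3]
  nlinarith [pow_pos (by norm_num : (0:ℝ) < 4) k, sq_nonneg ((k:ℝ)+1),
    mul_le_mul_of_nonneg_right (mul_le_mul_of_nonneg_left h2 hB) (pow_pos (by norm_num : (0:ℝ) < 4) k).le]

lemma sumS {c : ℕ → ℝ} {B : ℝ} (m : ℕ → ℕ)
    (hc : ∀ k, |c k| ≤ B * ((k:ℝ) + 1) ^ 2 / 4 ^ k) (hm : ∀ k, m k ≤ 2 * k + 2)
    {x : ℝ} (hx : |x| < 2) : Summable fun k => c k * x ^ (m k) :=
  summable_master c m B hc hm hx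

-- derivative lemmas
lemma F2_deriv {x : ℝ} (hx : |x| < 2) : HasDerivAt F2 (G2 x) x := by
  have h := hasDerivAt_master a2 (fun k => 2 * k + 2) 1 a2_bd (fun k => le_refl _) hx
  have e : (∑' k, a2 k * ((2 * k + 2 : ℕ) : ℝ) * x ^ (2 * k + 2 - 1)) = G2 x := by
    refine tsum_congr fun k => ?_
    have h1 : Cc k ≠ 0 := (Cc_pos k).ne'
    have hk1 : ((k:ℝ) + 1) ≠ 0 := by positivity
    show a2 k * ((2 * k + 2 : ℕ) : ℝ) * x ^ (2 * k + 2 - 1) = b2 k * x ^ (2 * k + 1)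
    rw [show 2 * k + 2 - 1 = 2 * k + 1 from rfl]
    unfold a2 b2
    push_cast
    field_simp
    try ring
  rw [← e]
  exact h

lemma G2_deriv {x : ℝ} (hx : |x| < 2) : HasDerivAt G2 (Hh2 x) x := by
  have h := hasDerivAt_master b2 (fun k => 2 * k + 1) 1 b2_bd (fun k => by show 2*k+1 ≤ 2*k+2; omega) hx
  have e : (∑' k, b2 k * ((2 * k + 1 : ℕ) : ℝ) * x ^ (2 * k + 1 - 1)) = Hh2 x := by
    refine tsum_congr fun k => ?_
    have h1 : Cc k ≠ 0 := (Cc_pos k).ne'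
    have hk1 : ((k:ℝ) + 1) ≠ 0 := by positivity
    show b2 k * ((2 * k + 1 : ℕ) : ℝ) * x ^ (2 * k + 1 - 1) = c2 k * x ^ (2 * k)
    rw [show 2 * k + 1 - 1 = 2 * k from rfl]
    unfold b2 c2
    push_cast
    field_simp
    try ring
  rw [← e]
  exact h

lemma F4_deriv {x : ℝ} (hx : |x| < 2) : HasDerivAt F4 (G4 x) x := by
  have h := hasDerivAt_master a4 (fun k => 2 * k + 2) 3 a4_bd (fun k => le_refl _) hx
  have e : (∑' k, a4 k * ((2 * k + 2 : ℕ) : ℝ) * x ^ (2 * k + 2 - 1)) = G4 x := by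
    refine tsum_congr fun k => ?_
    have h1 : Cc k ≠ 0 := (Cc_pos k).ne'
    have hk1 : ((k:ℝ) + 1) ≠ 0 := by positivity
    show a4 k * ((2 * k + 2 : ℕ) : ℝ) * x ^ (2 * k + 2 - 1) = b4 k * x ^ (2 * k + 1)
    rw [show 2 * k + 2 - 1 = 2 * k + 1 from rfl]
    unfold a4 b4
    push_cast
    field_simp
    try ring
  rw [← e]
  exact h

lemma G4_deriv {x : ℝ} (hx : |x| < 2) : HasDerivAt G4 (Hh4 x) x := by
  have h := hasDerivAt_master b4 (fun k => 2 * k + 1) 3 b4_bd (fun k => by show 2*k+1 ≤ 2*k+2; omega) hx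
  have e : (∑' k, b4 k * ((2 * k + 1 : ℕ) : ℝ) * x ^ (2 * k + 1 - 1)) = Hh4 x := by
    refine tsum_congr fun k => ?_
    have h1 : Cc k ≠ 0 := (Cc_pos k).ne'
    have hk1 : ((k:ℝ) + 1) ≠ 0 := by positivity
    show b4 k * ((2 * k + 1 : ℕ) : ℝ) * x ^ (2 * k + 1 - 1) = c4 k * x ^ (2 * k)
    rw [show 2 * k + 1 - 1 = 2 * k from rfl]
    unfold b4 c4
    push_cast
    field_simp
    try ring
  rw [← e]
  exact h

-- the ODE identities
lemma O2 {x : ℝ} (hx : |x| < 2) : (4 - x ^ 2) * Hh2 x - x * G2 x = 4 := by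
  have hB8 : (0:ℝ) ≤ 2 := by norm_num
  have bd4c2 : ∀ k, |4 * c2 k| ≤ 8 * ((k:ℝ) + 1) ^ 2 / 4 ^ k := by
    intro k
    rw [abs_mul, abs_of_nonneg (by norm_num : (0:ℝ) ≤ 4)]
    calc 4 * |c2 k| ≤ 4 * (2 * ((k:ℝ) + 1) ^ 2 / 4 ^ k) := by
          linarith [c2_bd k]
    _ = 8 * ((k:ℝ) + 1) ^ 2 / 4 ^ k := by ring
  have bd4c2s : ∀ k, |4 * c2 (k + 1)| ≤ 8 * ((k:ℝ) + 1) ^ 2 / 4 ^ k :=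
    bd_shift (by norm_num) bd4c2
  have S1 : Summable fun k => 4 * c2 k * x ^ (2 * k) :=
    sumS (fun k => 2 * k) bd4c2 (fun k => by show 2*k ≤ 2*k+2; omega) hx
  have S2 : Summable fun k => 4 * c2 (k + 1) * x ^ (2 * k + 2) :=
    sumS (fun k => 2 * k + 2) bd4c2s (fun k => le_refl _) hx
  have S3 : Summable fun k => c2 k * x ^ (2 * k + 2) :=
    sumS (fun k => 2 * k + 2) c2_bd (fun k => le_refl _) hx
  have S4 : Summable fun k => b2 k * x ^ (2 * k + 2) :=
    sumS (fun k => 2 * k + 2) b2_bd (fun k => le_refl _) hx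
  have e1 : (4 - x ^ 2) * Hh2 x = (∑' k, 4 * c2 k * x ^ (2 * k)) - ∑' k, c2 k * x ^ (2 * k + 2) := by
    unfold Hh2
    rw [← tsum_mul_left, ← Summable.tsum_sub S1 S3]
    exact tsum_congr fun k => by ring
  have e2 : x * G2 x = ∑' k, b2 k * x ^ (2 * k + 2) := by
    unfold G2
    rw [← tsum_mul_left]
    exact tsum_congr fun k => by ring
  have hc20 : c2 0 = 1 := by
    unfold c2 Cc
    norm_num
  have e3 : (∑' k, 4 * c2 k * x ^ (2 * k)) = 4 + ∑' k, 4 * c2 (k + 1) * x ^ (2 * k + 2) := by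
    rw [Summable.tsum_eq_zero_add S1]
    have h0 : 4 * c2 0 * x ^ (2 * 0) = 4 := by rw [hc20]; norm_num
    rw [h0]
    congr 1
  have z : ∀ k : ℕ, (4 * c2 (k + 1) * x ^ (2 * k + 2) - c2 k * x ^ (2 * k + 2))
      - b2 k * x ^ (2 * k + 2) = 0 := by
    intro k
    have h := I2 k
    calc (4 * c2 (k + 1) * x ^ (2 * k + 2) - c2 k * x ^ (2 * k + 2)) - b2 k * x ^ (2 * k + 2)
        = (4 * c2 (k + 1) - (c2 k + b2 k)) * x ^ (2 * k + 2) := by ring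
    _ = 0 := by rw [h]; ring
  have key : (4 - x ^ 2) * Hh2 x - x * G2 x
      = 4 + ∑' k, ((4 * c2 (k + 1) * x ^ (2 * k + 2) - c2 k * x ^ (2 * k + 2))
        - b2 k * x ^ (2 * k + 2)) := by
    rw [e1, e2, e3, Summable.tsum_sub (S2.sub S3) S4, Summable.tsum_sub S2 S3]
    ring
  rw [key, tsum_congr z, tsum_zero]
  ring

lemma O4 {x : ℝ} (hx : |x| < 2) : (4 - x ^ 2) * Hh4 x - x * G4 x = 6 * F2 x := by
  have bd4c4 : ∀ k, |4 * c4 k| ≤ 24 * ((k:ℝ) + 1) ^ 2 / 4 ^ k := by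
    intro k
    rw [abs_mul, abs_of_nonneg (by norm_num : (0:ℝ) ≤ 4)]
    calc 4 * |c4 k| ≤ 4 * (6 * ((k:ℝ) + 1) ^ 2 / 4 ^ k) := by
          linarith [c4_bd k]
    _ = 24 * ((k:ℝ) + 1) ^ 2 / 4 ^ k := by ring
  have bd4c4s : ∀ k, |4 * c4 (k + 1)| ≤ 24 * ((k:ℝ) + 1) ^ 2 / 4 ^ k :=
    bd_shift (by norm_num) bd4c4
  have S1 : Summable fun k => 4 * c4 k * x ^ (2 * k) :=
    sumS (fun k => 2 * k) bd4c4 (fun k => by show 2*k ≤ 2*k+2; omega) hx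
  have S2 : Summable fun k => 4 * c4 (k + 1) * x ^ (2 * k + 2) :=
    sumS (fun k => 2 * k + 2) bd4c4s (fun k => le_refl _) hx
  have S3 : Summable fun k => c4 k * x ^ (2 * k + 2) :=
    sumS (fun k => 2 * k + 2) c4_bd (fun k => le_refl _) hx
  have S4 : Summable fun k => b4 k * x ^ (2 * k + 2) :=
    sumS (fun k => 2 * k + 2) b4_bd (fun k => le_refl _) hx
  have S5 : Summable fun k => 6 * a2 k * x ^ (2 * k + 2) := by
    refine ((sumS (fun k => 2 * k + 2) a2_bd (fun k => le_refl _) hx).mul_left 6).congr fun k => ?_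
    ring
  have e1 : (4 - x ^ 2) * Hh4 x = (∑' k, 4 * c4 k * x ^ (2 * k)) - ∑' k, c4 k * x ^ (2 * k + 2) := by
    unfold Hh4
    rw [← tsum_mul_left, ← Summable.tsum_sub S1 S3]
    exact tsum_congr fun k => by ring
  have e2 : x * G4 x = ∑' k, b4 k * x ^ (2 * k + 2) := by
    unfold G4
    rw [← tsum_mul_left]
    exact tsum_congr fun k => by ring
  have e4 : 6 * F2 x = ∑' k, 6 * a2 k * x ^ (2 * k + 2) := by
    unfold F2
    rw [← tsum_mul_left]
    exact tsum_congr fun k => by ring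
  have hc40 : c4 0 = 0 := by
    unfold c4
    rw [show harmonic2 0 = 0 from by simp [harmonic2]]
    ring
  have e3 : (∑' k, 4 * c4 k * x ^ (2 * k)) = ∑' k, 4 * c4 (k + 1) * x ^ (2 * k + 2) := by
    rw [Summable.tsum_eq_zero_add S1, hc40]
    rw [show (4:ℝ) * 0 * x ^ (2 * 0) = 0 from by ring, zero_add]
    exact tsum_congr fun k => by rw [show 2 * (k + 1) = 2 * k + 2 from by ring]
  have z : ∀ k : ℕ, ((4 * c4 (k + 1) * x ^ (2 * k + 2) - c4 k * x ^ (2 * k + 2))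
      - b4 k * x ^ (2 * k + 2)) - 6 * a2 k * x ^ (2 * k + 2) = 0 := by
    intro k
    have h := I4 k
    calc ((4 * c4 (k + 1) * x ^ (2 * k + 2) - c4 k * x ^ (2 * k + 2))
        - b4 k * x ^ (2 * k + 2)) - 6 * a2 k * x ^ (2 * k + 2)
        = (4 * c4 (k + 1) - (c4 k + b4 k + 6 * a2 k)) * x ^ (2 * k + 2) := by ring
    _ = 0 := by rw [h]; ring
  have key : ((4 - x ^ 2) * Hh4 x - x * G4 x) - 6 * F2 x
      = ∑' k, (((4 * c4 (k + 1) * x ^ (2 * k + 2) - c4 k * x ^ (2 * k + 2))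
        - b4 k * x ^ (2 * k + 2)) - 6 * a2 k * x ^ (2 * k + 2)) := by
    rw [e1, e2, e3, e4, Summable.tsum_sub ((S2.sub S3).sub S4) S5, Summable.tsum_sub (S2.sub S3) S4,
      Summable.tsum_sub S2 S3]
    try ring
  have : ((4 - x ^ 2) * Hh4 x - x * G4 x) - 6 * F2 x = 0 := by
    rw [key, tsum_congr z, tsum_zero]
  linarith

noncomputable def sqf (x : ℝ) : ℝ := Real.sqrt (4 - x ^ 2)

lemma pos4 {x : ℝ} (hx : |x| < 2) : 0 < 4 - x ^ 2 := by
  have h := abs_lt.1 hx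
  nlinarith [h.1, h.2]

lemma sqf_pos {x : ℝ} (hx : |x| < 2) : 0 < sqf x := Real.sqrt_pos.2 (pos4 hx)

lemma sqf_sq {x : ℝ} (hx : |x| < 2) : sqf x * sqf x = 4 - x ^ 2 :=
  Real.mul_self_sqrt (pos4 hx).le

lemma arcsin_hasDeriv {x : ℝ} (hx : |x| < 2) :
    HasDerivAt (fun y => Real.arcsin (y / 2)) (1 / sqf x) x := by
  have h := abs_lt.1 hx
  have h1 : x / 2 ≠ -1 := fun hc => by
    have : x = -2 := by linarith
    linarith [h.1]
  have h2 : x / 2 ≠ 1 := fun hc => by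
    have : x = 2 := by linarith
    linarith [h.2]
  have hdiv : HasDerivAt (fun y : ℝ => y / 2) (1 / 2) x := by
    simpa using (hasDerivAt_id x).div_const 2
  have hcomp := (Real.hasDerivAt_arcsin h1 h2).comp x hdiv
  have hpos : 0 < 1 - (x / 2) ^ 2 := by nlinarith [h.1, h.2]
  have hs : Real.sqrt (1 - (x / 2) ^ 2) ≠ 0 := (Real.sqrt_pos.2 hpos).ne'
  have e : 1 / Real.sqrt (1 - (x / 2) ^ 2) * (1 / 2) = 1 / sqf x := by
    unfold sqf
    rw [show (4 - x ^ 2 : ℝ) = 4 * (1 - (x / 2) ^ 2) from by ring,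
      Real.sqrt_mul (by norm_num : (0:ℝ) ≤ 4),
      show Real.sqrt 4 = 2 from by
        rw [show (4:ℝ) = 2 ^ 2 from by norm_num, Real.sqrt_sq (by norm_num : (0:ℝ) ≤ 2)]]
    field_simp
  rw [← e]
  exact hcomp

lemma sqf_hasDeriv {x : ℝ} (hx : |x| < 2) : HasDerivAt sqf (-x / sqf x) x := by
  have hinner : HasDerivAt (fun y : ℝ => 4 - y ^ 2) (-(2 * x ^ 1)) x :=
    (hasDerivAt_pow 2 x).const_sub 4
  have hcomp := (Real.hasDerivAt_sqrt (pos4 hx).ne').comp x hinner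
  have hs := (sqf_pos hx).ne'
  have e : 1 / (2 * Real.sqrt (4 - x ^ 2)) * (-(2 * x ^ 1)) = -x / sqf x := by
    unfold sqf at *
    field_simp
  rw [← e]
  exact hcomp

lemma zero_of_deriv {f : ℝ → ℝ} (hd : ∀ y : ℝ, |y| < 2 → HasDerivAt f 0 y) (h0 : f 0 = 0)
    {x : ℝ} (hx : |x| < 2) : f x = 0 := by
  have hmem : ∀ y : ℝ, |y| < 2 → y ∈ Ioo (-2:ℝ) 2 := fun y hy => by
    rw [mem_Ioo]; exact abs_lt.1 hy
  have hconv : Convex ℝ (Ioo (-2:ℝ) 2) := convex_Ioo _ _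
  have habs : ∀ y : ℝ, y ∈ Ioo (-2:ℝ) 2 → |y| < 2 := fun y hy => abs_lt.2 ⟨hy.1, hy.2⟩
  have hdiff : DifferentiableOn ℝ f (Ioo (-2:ℝ) 2) := fun y hy =>
    ((hd y (habs y hy)).differentiableAt).differentiableWithinAt
  have hz : ∀ y ∈ Ioo (-2:ℝ) 2, fderivWithin ℝ f (Ioo (-2:ℝ) 2) y = 0 := by
    intro y hy
    rw [fderivWithin_of_isOpen isOpen_Ioo hy, (hd y (habs y hy)).hasFDerivAt.fderiv]
    ext z
    simp
  have := hconv.is_const_of_fderivWithin_eq_zero hdiff hz (hmem x hx) (hmem 0 (by norm_num))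
  rwa [h0] at this

lemma G2_zero : G2 0 = 0 := by
  unfold G2
  rw [tsum_congr (fun k : ℕ => show b2 k * (0:ℝ) ^ (2 * k + 1) = 0 from by
    rw [zero_pow (by omega)]; ring), tsum_zero]

lemma G4_zero : G4 0 = 0 := by
  unfold G4
  rw [tsum_congr (fun k : ℕ => show b4 k * (0:ℝ) ^ (2 * k + 1) = 0 from by
    rw [zero_pow (by omega)]; ring), tsum_zero]

lemma F2_zero : F2 0 = 0 := by
  unfold F2
  rw [tsum_congr (fun k : ℕ => show a2 k * (0:ℝ) ^ (2 * k + 2) = 0 from by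
    rw [zero_pow (by omega)]; ring), tsum_zero]

lemma F4_zero : F4 0 = 0 := by
  unfold F4
  rw [tsum_congr (fun k : ℕ => show a4 k * (0:ℝ) ^ (2 * k + 2) = 0 from by
    rw [zero_pow (by omega)]; ring), tsum_zero]

lemma claimA {x : ℝ} (hx : |x| < 2) : sqf x * G2 x = 4 * Real.arcsin (x / 2) := by
  have hd : ∀ y : ℝ, |y| < 2 →
      HasDerivAt (fun y => sqf y * G2 y - 4 * Real.arcsin (y / 2)) 0 y := by
    intro y hy
    have h3 := ((sqf_hasDeriv hy).mul (G2_deriv hy)).sub ((arcsin_hasDeriv hy).const_mul 4)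
    convert h3 using 1
    · rfl
    · rfl
    · rfl
    have hs := (sqf_pos hy).ne'
    have hsq := sqf_sq hy
    have key : -y / sqf y * G2 y + sqf y * Hh2 y - 4 * (1 / sqf y)
        = ((4 - y ^ 2) * Hh2 y - y * G2 y - 4) / sqf y := by
      rw [← hsq]
      field_simp
      ring
    rw [key, show (4 - y ^ 2) * Hh2 y - y * G2 y - 4 = 0 from by linarith [O2 hy], zero_div]
  have h0 : sqf 0 * G2 0 - 4 * Real.arcsin (0 / 2) = 0 := by
    rw [G2_zero]
    norm_num
  have := zero_of_deriv hd h0 hx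
  linarith

lemma claimB {x : ℝ} (hx : |x| < 2) : F2 x = 2 * Real.arcsin (x / 2) ^ 2 := by
  have hd : ∀ y : ℝ, |y| < 2 →
      HasDerivAt (fun y => F2 y - 2 * Real.arcsin (y / 2) ^ 2) 0 y := by
    intro y hy
    have h3 := (F2_deriv hy).sub (((arcsin_hasDeriv hy).pow 2).const_mul 2)
    convert h3 using 1
    · rfl
    · rfl
    · rfl
    have hs := (sqf_pos hy).ne'
    have hA := claimA hy
    field_simp
    nlinarith [hA]
  have h0 : F2 0 - 2 * Real.arcsin (0 / 2) ^ 2 = 0 := by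
    rw [F2_zero]
    norm_num
  have := zero_of_deriv hd h0 hx
  linarith

lemma claimC {x : ℝ} (hx : |x| < 2) : sqf x * G4 x = 4 * Real.arcsin (x / 2) ^ 3 := by
  have hd : ∀ y : ℝ, |y| < 2 →
      HasDerivAt (fun y => sqf y * G4 y - 4 * Real.arcsin (y / 2) ^ 3) 0 y := by
    intro y hy
    have h3 := ((sqf_hasDeriv hy).mul (G4_deriv hy)).sub
      (((arcsin_hasDeriv hy).pow 3).const_mul 4)
    convert h3 using 1
    · rfl
    · rfl
    · rfl
    have hs := (sqf_pos hy).ne'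
    have hsq := sqf_sq hy
    have hO := O4 hy
    have hB := claimB hy
    have key : -y / sqf y * G4 y + sqf y * Hh4 y
        - 4 * (3 * Real.arcsin (y / 2) ^ (3 - 1) * (1 / sqf y))
        = ((4 - y ^ 2) * Hh4 y - y * G4 y - 12 * Real.arcsin (y / 2) ^ 2) / sqf y := by
      rw [← hsq]
      field_simp
      ring
    push_cast
    rw [key, show (4 - y ^ 2) * Hh4 y - y * G4 y - 12 * Real.arcsin (y / 2) ^ 2 = 0 from by
      linarith [hO, hB], zero_div]
  have h0 : sqf 0 * G4 0 - 4 * Real.arcsin (0 / 2) ^ 3 = 0 := by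
    rw [G4_zero]
    norm_num
  have := zero_of_deriv hd h0 hx
  linarith

lemma claimD {x : ℝ} (hx : |x| < 2) : F4 x = Real.arcsin (x / 2) ^ 4 := by
  have hd : ∀ y : ℝ, |y| < 2 →
      HasDerivAt (fun y => F4 y - Real.arcsin (y / 2) ^ 4) 0 y := by
    intro y hy
    have h3 := (F4_deriv hy).sub ((arcsin_hasDeriv hy).pow 4)
    convert h3 using 1
    · rfl
    · rfl
    · rfl
    have hs := (sqf_pos hy).ne'
    have hC := claimC hy
    field_simp
    nlinarith [hC]
  have h0 : F4 0 - Real.arcsin (0 / 2) ^ 4 = 0 := by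
    rw [F4_zero]
    norm_num
  have := zero_of_deriv hd h0 hx
  linarith

lemma partial_le (N : ℕ) :
    ∑ k ∈ Finset.range N, a4 k * (2:ℝ) ^ (2 * k + 2) ≤ (Real.pi / 2) ^ 4 := by
  have hub : ∀ y : ℝ, y ∈ Ioo (0:ℝ) 2 →
      ∑ k ∈ Finset.range N, a4 k * y ^ (2 * k + 2) ≤ (Real.pi / 2) ^ 4 := by
    intro y hy
    have hy0 : (0:ℝ) ≤ y := hy.1.le
    have hylt : |y| < 2 := abs_lt.2 ⟨by linarith [hy.1], hy.2⟩
    have hS : Summable fun k => a4 k * y ^ (2 * k + 2) :=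
      sumS (fun k => 2 * k + 2) a4_bd (fun k => le_refl _) hylt
    have h1 : ∑ k ∈ Finset.range N, a4 k * y ^ (2 * k + 2) ≤ F4 y :=
      Summable.sum_le_tsum _ (fun k _ => mul_nonneg (a4_nonneg k) (by positivity)) hS
    have h2 : F4 y = Real.arcsin (y / 2) ^ 4 := claimD hylt
    have h3 : Real.arcsin (y / 2) ^ 4 ≤ (Real.pi / 2) ^ 4 := by
      have hm := Real.arcsin_mem_Icc (y / 2)
      have habs : |Real.arcsin (y / 2)| ≤ Real.pi / 2 := abs_le.2 ⟨hm.1, hm.2⟩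
      calc Real.arcsin (y / 2) ^ 4 = |Real.arcsin (y / 2)| ^ 4 := by
            rw [show (4:ℕ) = 2 * 2 from rfl, pow_mul, pow_mul, sq_abs]
      _ ≤ (Real.pi / 2) ^ 4 := pow_le_pow_left₀ (abs_nonneg _) habs 4
    linarith
  have hlim : Tendsto (fun y : ℝ => ∑ k ∈ Finset.range N, a4 k * y ^ (2 * k + 2))
      (𝓝[<] (2:ℝ)) (𝓝 (∑ k ∈ Finset.range N, a4 k * (2:ℝ) ^ (2 * k + 2))) := by
    apply Tendsto.mono_left _ nhdsWithin_le_nhds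
    exact (continuous_finset_sum _ fun k _ => continuous_const.mul (continuous_pow (2 * k + 2))).tendsto 2
  refine le_of_tendsto hlim ?_
  filter_upwards [Ioo_mem_nhdsLT_of_mem (show (2:ℝ) ∈ Ioc (0:ℝ) 2 from by norm_num)] with y hy
  exact hub y hy

lemma endpointT : F4 2 = (Real.pi / 2) ^ 4 := by
  have hnn : ∀ k : ℕ, 0 ≤ a4 k * (2:ℝ) ^ (2 * k + 2) := fun k =>
    mul_nonneg (a4_nonneg k) (by positivity)
  have hsum : Summable fun k => a4 k * (2:ℝ) ^ (2 * k + 2) :=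
    summable_of_sum_range_le hnn partial_le
  have hle : F4 2 ≤ (Real.pi / 2) ^ 4 := Summable.tsum_le_of_sum_range_le hsum partial_le
  have hge : (Real.pi / 2) ^ 4 ≤ F4 2 := by
    have hub : ∀ y : ℝ, y ∈ Ioo (0:ℝ) 2 → Real.arcsin (y / 2) ^ 4 ≤ F4 2 := by
      intro y hy
      have hy0 : (0:ℝ) ≤ y := hy.1.le
      have hylt : |y| < 2 := abs_lt.2 ⟨by linarith [hy.1], hy.2⟩
      have hS : Summable fun k => a4 k * y ^ (2 * k + 2) :=
        sumS (fun k => 2 * k + 2) a4_bd (fun k => le_refl _) hylt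
      rw [← claimD hylt]
      refine Summable.tsum_le_tsum (fun k => ?_) hS hsum
      have hple : y ^ (2 * k + 2) ≤ (2:ℝ) ^ (2 * k + 2) :=
        pow_le_pow_left₀ hy0 (by linarith [hy.2]) _
      exact mul_le_mul_of_nonneg_left hple (a4_nonneg k)
    have hc : Continuous fun y : ℝ => Real.arcsin (y / 2) ^ 4 :=
      (Real.continuous_arcsin.comp (continuous_id.div_const 2)).pow 4
    have hlim : Tendsto (fun y : ℝ => Real.arcsin (y / 2) ^ 4)
        (𝓝[<] (2:ℝ)) (𝓝 ((Real.pi / 2) ^ 4)) := by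
      have h := (hc.tendsto 2).mono_left (nhdsWithin_le_nhds (s := Iio (2:ℝ)))
      have e : Real.arcsin ((2:ℝ) / 2) ^ 4 = (Real.pi / 2) ^ 4 := by
        norm_num [Real.arcsin_one]
      rwa [e] at h
    refine le_of_tendsto hlim ?_
    filter_upwards [Ioo_mem_nhdsLT_of_mem (show (2:ℝ) ∈ Ioc (0:ℝ) 2 from by norm_num)] with y hy
    exact hub y hy
  linarith

end ArcsinQuartic

theorem stmt_8 (x : ℝ) (hx : -2 ≤ x ∧ x ≤ 2) :
    (Real.arcsin (x / 2)) ^ 4 =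
      3 / 2 * ∑' k : ℕ,
        harmonic2 k /
          (((k + 1 : ℕ) : ℝ) ^ 2 * (Nat.choose (2 * (k + 1)) (k + 1) : ℝ)) *
            x ^ (2 * (k + 1)) := by
  open ArcsinQuartic in
  have hrhs : ∀ y : ℝ,
      3 / 2 * ∑' k : ℕ, harmonic2 k /
        (((k + 1 : ℕ) : ℝ) ^ 2 * (Nat.choose (2 * (k + 1)) (k + 1) : ℝ)) * y ^ (2 * (k + 1))
      = ArcsinQuartic.F4 y := by
    intro y
    unfold ArcsinQuartic.F4
    rw [← tsum_mul_left]
    refine tsum_congr fun k => ?_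
    unfold ArcsinQuartic.a4 ArcsinQuartic.Cc
    rw [show 2 * (k + 1) = 2 * k + 2 from by ring]
    push_cast
    ring
  obtain ⟨h1, h2⟩ := hx
  by_cases hlt : |x| < 2
  · rw [hrhs, ArcsinQuartic.claimD hlt]
  · have habs : |x| = 2 := le_antisymm (abs_le.2 ⟨h1, h2⟩) (not_lt.1 hlt)
    have hcases : x = 2 ∨ x = -2 := (abs_eq (by norm_num : (0:ℝ) ≤ 2)).1 habs
    have hF : ArcsinQuartic.F4 x = ArcsinQuartic.F4 2 := by
      rcases hcases with rfl | rfl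
      · rfl
      · unfold ArcsinQuartic.F4
        exact tsum_congr fun k => by
          rw [show ((-2:ℝ)) ^ (2 * k + 2) = (2:ℝ) ^ (2 * k + 2) from by
            rw [show 2 * k + 2 = 2 * (k + 1) from by ring, pow_mul, pow_mul]; norm_num]
    have hL : Real.arcsin (x / 2) ^ 4 = (Real.pi / 2) ^ 4 := by
      rcases hcases with rfl | rfl
      · norm_num [Real.arcsin_one]
      · rw [show ((-2:ℝ)) / 2 = -1 from by norm_num, Real.arcsin_neg, Real.arcsin_one]
        ring
    rw [hrhs, hF, ArcsinQuartic.endpointT, hL]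
end

section
/- The series \sum_{k=1}^{\infty} \frac{H_{k-1}^{(2)}}{k^2 \binom{2k}{k}} converges to \pi^4/1944. -/
open Real

namespace Stmt9Aux

/-- real central binomial coefficient -/
noncomputable def cb (k : ℕ) : ℝ := (Nat.centralBinom k : ℝ)

lemma cb_pos (k : ℕ) : 0 < cb k := by
  unfold cb; exact_mod_cast Nat.centralBinom_pos k

lemma cb_rec (k : ℕ) : ((k : ℝ) + 1) * cb (k + 1) = 2 * (2 * k + 1) * cb k := by
  unfold cb
  have h := Nat.succ_mul_centralBinom_succ k
  have h2 : ((k + 1) * Nat.centralBinom (k + 1) : ℝ) = ((2 * (2 * k + 1) * Nat.centralBinom k : ℕ) : ℝ) := by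
    exact_mod_cast congrArg (Nat.cast : ℕ → ℝ) h
  push_cast at h2 ⊢
  linarith [h2]

lemma two_pow_le_cb (k : ℕ) : (2 : ℝ) ^ k ≤ cb k := by
  have : 2 ^ k ≤ Nat.centralBinom k := by
    induction k with
    | zero => simp [Nat.centralBinom]
    | succ n ih =>
      have hstep : 2 * Nat.centralBinom n ≤ Nat.centralBinom (n + 1) := by
        have h := Nat.succ_mul_centralBinom_succ n
        have : (n + 1) * (2 * Nat.centralBinom n) ≤ (n + 1) * Nat.centralBinom (n + 1) := by
          rw [h]; nlinarith [Nat.centralBinom_pos n]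
        exact Nat.le_of_mul_le_mul_left this (Nat.succ_pos n)
      calc 2 ^ (n + 1) = 2 * 2 ^ n := by ring
        _ ≤ 2 * Nat.centralBinom n := by omega
        _ ≤ Nat.centralBinom (n + 1) := hstep
  unfold cb
  exact_mod_cast this

lemma harmonic2_succ (n : ℕ) : harmonic2 (n + 1) = harmonic2 n + 1 / ((n : ℝ) + 1) ^ 2 := by
  unfold harmonic2; rw [Finset.sum_range_succ]

lemma harmonic2_nonneg (n : ℕ) : 0 ≤ harmonic2 n := by
  unfold harmonic2; positivity

lemma harmonic2_le_two (n : ℕ) : harmonic2 n ≤ 2 := by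
  have key : ∀ n : ℕ, harmonic2 n ≤ 2 - 2 / ((n : ℝ) + 1) := by
    intro n
    induction n with
    | zero => simp [harmonic2]
    | succ m ih =>
      rw [harmonic2_succ]
      have hm : (0:ℝ) < (m:ℝ) + 1 := by positivity
      have hm2 : (0:ℝ) < (m:ℝ) + 2 := by positivity
      have e : 2 / ((m:ℝ)+1) - 1/((m:ℝ)+1)^2 = (2*((m:ℝ)+1)-1)/((m:ℝ)+1)^2 := by
        field_simp
      have : 2 / ((m:ℝ)+2) ≤ 2/((m:ℝ)+1) - 1/((m:ℝ)+1)^2 := by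
        rw [e, div_le_div_iff₀ hm2 (by positivity)]
        nlinarith
      push_cast
      rw [show ((m:ℝ)+1+1) = (m:ℝ)+2 from by ring]
      linarith
  have h := key n
  have : (0:ℝ) < (n:ℝ) + 1 := by positivity
  have : 0 ≤ 2 / ((n : ℝ) + 1) := by positivity
  linarith

/-- tail weight -/
noncomputable def g (n : ℕ) (θ : ℝ) : ℝ := (2 * sin θ) ^ (2 * n) / cb n

noncomputable def T (n : ℕ) (θ : ℝ) : ℝ :=
  ∑ k ∈ Finset.range n, (2 * sin θ) ^ (2 * k + 1) * cos θ / (((k : ℝ) + 1) * cb (k + 1))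

noncomputable def S (n : ℕ) (θ : ℝ) : ℝ :=
  ∑ k ∈ Finset.range n, (2 * sin θ) ^ (2 * k + 2) / (2 * ((k : ℝ) + 1) ^ 2 * cb (k + 1))

noncomputable def V (n : ℕ) (θ : ℝ) : ℝ :=
  ∑ k ∈ Finset.range n, 3 * harmonic2 k * ((2 * sin θ) ^ (2 * k + 1) * cos θ) / (((k : ℝ) + 1) * cb (k + 1))

noncomputable def U (n : ℕ) (θ : ℝ) : ℝ :=
  ∑ k ∈ Finset.range n, (3 / 2) * harmonic2 k * (2 * sin θ) ^ (2 * k + 2) / (((k : ℝ) + 1) ^ 2 * cb (k + 1))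

/-- derivative of the odd-power building block -/
lemma hasDerivAt_odd (m : ℕ) (θ : ℝ) :
    HasDerivAt (fun x : ℝ => (2 * sin x) ^ (2 * m + 1) * cos x)
      (2 * (2 * (m : ℝ) + 1) * (2 * sin θ) ^ (2 * m) - ((m : ℝ) + 1) * (2 * sin θ) ^ (2 * m + 2)) θ := by
  have h1 : HasDerivAt (fun x : ℝ => 2 * sin x) (2 * cos θ) θ := (hasDerivAt_sin θ).const_mul 2
  have h2 : HasDerivAt (fun x : ℝ => (2 * sin x) ^ (2 * m + 1) * cos x) _ θ := (h1.pow (2 * m + 1)).mul (hasDerivAt_cos θ)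
  convert h2 using 1
  have hexp : 2 * m + 1 - 1 = 2 * m := by omega
  rw [hexp]
  simp only [Pi.pow_apply]
  push_cast
  linear_combination (-(2 * (2 * (m : ℝ) + 1) * (2 * sin θ) ^ (2 * m))) * (sin_sq_add_cos_sq θ)

/-- derivative of the even-power building block -/
lemma hasDerivAt_even (m : ℕ) (θ : ℝ) :
    HasDerivAt (fun x : ℝ => (2 * sin x) ^ (2 * m + 2))
      (4 * ((m : ℝ) + 1) * ((2 * sin θ) ^ (2 * m + 1) * cos θ)) θ := by
  have h1 : HasDerivAt (fun x : ℝ => 2 * sin x) (2 * cos θ) θ := (hasDerivAt_sin θ).const_mul 2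
  have h2 : HasDerivAt (fun x : ℝ => (2 * sin x) ^ (2 * m + 2)) _ θ := h1.pow (2 * m + 2)
  convert h2 using 1
  have hexp : 2 * m + 2 - 1 = 2 * m + 1 := by omega
  rw [hexp]
  push_cast
  ring

lemma T_deriv (n : ℕ) (θ : ℝ) : HasDerivAt (T n) (1 - g n θ) θ := by
  have h : HasDerivAt (fun x => ∑ k ∈ Finset.range n,
      (2 * sin x) ^ (2 * k + 1) * cos x / (((k : ℝ) + 1) * cb (k + 1)))
      (∑ k ∈ Finset.range n,
        (2 * (2 * (k : ℝ) + 1) * (2 * sin θ) ^ (2 * k) - ((k : ℝ) + 1) * (2 * sin θ) ^ (2 * k + 2))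
          / (((k : ℝ) + 1) * cb (k + 1))) θ :=
    HasDerivAt.fun_sum (fun k _ => (hasDerivAt_odd k θ).div_const _)
  have heq : ∑ k ∈ Finset.range n,
      (2 * (2 * (k : ℝ) + 1) * (2 * sin θ) ^ (2 * k) - ((k : ℝ) + 1) * (2 * sin θ) ^ (2 * k + 2))
        / (((k : ℝ) + 1) * cb (k + 1)) = 1 - g n θ := by
    have hterm : ∀ k : ℕ,
        (2 * (2 * (k : ℝ) + 1) * (2 * sin θ) ^ (2 * k) - ((k : ℝ) + 1) * (2 * sin θ) ^ (2 * k + 2))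
          / (((k : ℝ) + 1) * cb (k + 1)) = g k θ - g (k + 1) θ := by
      intro k
      unfold g
      have e1 : 2 * (k + 1) = 2 * k + 2 := by ring
      rw [e1]
      have h1 : cb k ≠ 0 := (cb_pos k).ne'
      have h3 : ((k : ℝ) + 1) ≠ 0 := by positivity
      have h4 : (2 * (k:ℝ) + 1) ≠ 0 := by positivity
      have hc : cb (k + 1) = 2 * (2 * (k:ℝ) + 1) * cb k / ((k:ℝ) + 1) := by
        rw [← cb_rec]; field_simp
      rw [hc]
      field_simp
    rw [Finset.sum_congr rfl (fun k _ => hterm k), Finset.sum_range_sub' (fun k => g k θ) n]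
    have : g 0 θ = 1 := by unfold g cb; simp [Nat.centralBinom]
    rw [this]
  rw [← heq]; exact h

lemma S_deriv (n : ℕ) (θ : ℝ) : HasDerivAt (S n) (2 * T n θ) θ := by
  have h : HasDerivAt (fun x => ∑ k ∈ Finset.range n,
      (2 * sin x) ^ (2 * k + 2) / (2 * ((k : ℝ) + 1) ^ 2 * cb (k + 1)))
      (∑ k ∈ Finset.range n,
        (4 * ((k : ℝ) + 1) * ((2 * sin θ) ^ (2 * k + 1) * cos θ)) / (2 * ((k : ℝ) + 1) ^ 2 * cb (k + 1))) θ :=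
    HasDerivAt.fun_sum (fun k _ => (hasDerivAt_even k θ).div_const _)
  have heq : ∑ k ∈ Finset.range n,
      (4 * ((k : ℝ) + 1) * ((2 * sin θ) ^ (2 * k + 1) * cos θ)) / (2 * ((k : ℝ) + 1) ^ 2 * cb (k + 1))
      = 2 * T n θ := by
    unfold T
    rw [Finset.mul_sum]
    refine Finset.sum_congr rfl (fun k _ => ?_)
    have h2 : cb (k + 1) ≠ 0 := (cb_pos (k + 1)).ne'
    have h3 : ((k : ℝ) + 1) ≠ 0 := by positivity
    field_simp
    ring
  rw [← heq]; exact h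

lemma V_deriv (n : ℕ) (θ : ℝ) :
    HasDerivAt (V n) (6 * S n θ - 3 * harmonic2 n * g n θ) θ := by
  have h : HasDerivAt (fun x => ∑ k ∈ Finset.range n,
      3 * harmonic2 k * ((2 * sin x) ^ (2 * k + 1) * cos x) / (((k : ℝ) + 1) * cb (k + 1)))
      (∑ k ∈ Finset.range n,
        3 * harmonic2 k * (2 * (2 * (k : ℝ) + 1) * (2 * sin θ) ^ (2 * k) - ((k : ℝ) + 1) * (2 * sin θ) ^ (2 * k + 2))
          / (((k : ℝ) + 1) * cb (k + 1))) θ := by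
    refine HasDerivAt.fun_sum (fun k _ => ?_)
    exact (((hasDerivAt_odd k θ).const_mul (3 * harmonic2 k)).div_const _)
  have heq : ∑ k ∈ Finset.range n,
      3 * harmonic2 k * (2 * (2 * (k : ℝ) + 1) * (2 * sin θ) ^ (2 * k) - ((k : ℝ) + 1) * (2 * sin θ) ^ (2 * k + 2))
        / (((k : ℝ) + 1) * cb (k + 1)) = 6 * S n θ - 3 * harmonic2 n * g n θ := by
    have hterm : ∀ k : ℕ,
        3 * harmonic2 k * (2 * (2 * (k : ℝ) + 1) * (2 * sin θ) ^ (2 * k) - ((k : ℝ) + 1) * (2 * sin θ) ^ (2 * k + 2))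
          / (((k : ℝ) + 1) * cb (k + 1)) = 3 * harmonic2 k * (g k θ - g (k + 1) θ) := by
      intro k
      have h1 : cb k ≠ 0 := (cb_pos k).ne'
      have h3 : ((k : ℝ) + 1) ≠ 0 := by positivity
      have h4 : (2 * (k:ℝ) + 1) ≠ 0 := by positivity
      unfold g
      have e1 : 2 * (k + 1) = 2 * k + 2 := by ring
      rw [e1]
      have hc : cb (k + 1) = 2 * (2 * (k:ℝ) + 1) * cb k / ((k:ℝ) + 1) := by
        rw [← cb_rec]; field_simp
      rw [hc]
      field_simp
    clear h
    rw [Finset.sum_congr rfl (fun k _ => hterm k)]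
    induction n with
    | zero => simp [S, harmonic2]
    | succ m ih =>
      rw [Finset.sum_range_succ, ih]
      unfold S
      rw [Finset.sum_range_succ]
      rw [harmonic2_succ]
      unfold g
      have e1 : 2 * (m + 1) = 2 * m + 2 := by ring
      rw [e1]
      have h2 : cb (m + 1) ≠ 0 := (cb_pos (m + 1)).ne'
      have h3 : ((m : ℝ) + 1) ≠ 0 := by positivity
      field_simp
      ring
  rw [← heq]; exact h

lemma U_deriv (n : ℕ) (θ : ℝ) : HasDerivAt (U n) (2 * V n θ) θ := by
  have h : HasDerivAt (fun x => ∑ k ∈ Finset.range n,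
      (3 / 2) * harmonic2 k * (2 * sin x) ^ (2 * k + 2) / (((k : ℝ) + 1) ^ 2 * cb (k + 1)))
      (∑ k ∈ Finset.range n,
        (3 / 2) * harmonic2 k * (4 * ((k : ℝ) + 1) * ((2 * sin θ) ^ (2 * k + 1) * cos θ))
          / (((k : ℝ) + 1) ^ 2 * cb (k + 1))) θ := by
    refine HasDerivAt.fun_sum (fun k _ => ?_)
    exact (((hasDerivAt_even k θ).const_mul ((3 / 2) * harmonic2 k)).div_const _)
  have heq : ∑ k ∈ Finset.range n,
      (3 / 2) * harmonic2 k * (4 * ((k : ℝ) + 1) * ((2 * sin θ) ^ (2 * k + 1) * cos θ))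
        / (((k : ℝ) + 1) ^ 2 * cb (k + 1)) = 2 * V n θ := by
    unfold V
    rw [Finset.mul_sum]
    refine Finset.sum_congr rfl (fun k _ => ?_)
    have h2 : cb (k + 1) ≠ 0 := (cb_pos (k + 1)).ne'
    have h3 : ((k : ℝ) + 1) ≠ 0 := by positivity
    field_simp
    ring
  rw [← heq]; exact h


lemma pi6_nonneg : (0:ℝ) ≤ π / 6 := by positivity

lemma pi6_le_one : π / 6 ≤ 1 := by linarith [pi_le_four]

lemma abs_bound {f f' : ℝ → ℝ} {C : ℝ}
    (hf : ∀ x, HasDerivAt f (f' x) x) (h0 : f 0 = 0)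
    (hC : ∀ x ∈ Set.Icc (0:ℝ) (π/6), |f' x| ≤ C) :
    ∀ x ∈ Set.Icc (0:ℝ) (π/6), |f x| ≤ C := by
  intro x hx
  have hC0 : 0 ≤ C := le_trans (abs_nonneg _) (hC 0 ⟨le_refl 0, pi6_nonneg⟩)
  have key := (convex_Icc (0:ℝ) (π/6)).norm_image_sub_le_of_norm_hasDerivWithin_le
    (fun y _ => (hf y).hasDerivWithinAt) (fun y hy => by simpa using hC y hy)
    ⟨le_refl 0, pi6_nonneg⟩ hx
  rw [h0] at key
  simp only [sub_zero, Real.norm_eq_abs] at key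
  have hx1 : |x| ≤ 1 := by
    rw [abs_of_nonneg hx.1]; exact hx.2.trans pi6_le_one
  calc |f x| ≤ C * |x| := key
    _ ≤ C * 1 := by nlinarith [abs_nonneg x]
    _ = C := mul_one C

lemma g_bound (n : ℕ) {t : ℝ} (ht : t ∈ Set.Icc (0:ℝ) (π/6)) : |g n t| ≤ 1 / cb n := by
  have hs0 : 0 ≤ sin t := sin_nonneg_of_nonneg_of_le_pi ht.1 (le_trans ht.2 (by linarith [pi_pos]))
  have hs : sin t ≤ 1 / 2 := by
    rw [← sin_pi_div_six]
    exact sin_le_sin_of_le_of_le_pi_div_two (by linarith [pi_pos, ht.1]) (by linarith [pi_pos]) ht.2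
  have h1 : (0:ℝ) ≤ 2 * sin t := by linarith
  have h2 : (2:ℝ) * sin t ≤ 1 := by linarith
  have hp : (2 * sin t) ^ (2 * n) ≤ 1 := pow_le_one₀ h1 h2
  have hp0 : (0:ℝ) ≤ (2 * sin t) ^ (2 * n) := pow_nonneg h1 _
  unfold g
  rw [abs_of_nonneg (div_nonneg hp0 (cb_pos n).le)]
  gcongr
  exact (cb_pos n).le

lemma T_zero (n : ℕ) : T n 0 = 0 := by
  unfold T; simp

lemma S_zero (n : ℕ) : S n 0 = 0 := by
  unfold S; simp

lemma V_zero (n : ℕ) : V n 0 = 0 := by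
  unfold V; simp

lemma U_zero (n : ℕ) : U n 0 = 0 := by
  unfold U; simp

lemma E_bound (n : ℕ) : ∀ t ∈ Set.Icc (0:ℝ) (π/6), |t - T n t| ≤ 1 / cb n := by
  apply abs_bound (f' := fun t => g n t)
  · intro t
    have h := (hasDerivAt_id t).sub (T_deriv n t)
    rwa [sub_sub_cancel] at h
  · simp [T_zero]
  · intro t ht; exact g_bound n ht

lemma F_bound (n : ℕ) : ∀ t ∈ Set.Icc (0:ℝ) (π/6), |t ^ 2 - S n t| ≤ 2 / cb n := by
  apply abs_bound (f' := fun t => 2 * (t - T n t))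
  · intro t
    have h := (hasDerivAt_pow 2 t).sub (S_deriv n t)
    have e : 2 * (t - T n t) = (2:ℕ) * t ^ (2 - 1) - 2 * T n t := by push_cast; ring
    rwa [e]
  · simp [S_zero]
  · intro t ht
    rw [abs_mul, abs_two]
    have := E_bound n t ht
    rw [show (2:ℝ) / cb n = 2 * (1 / cb n) from by ring]
    gcongr

lemma W_bound (n : ℕ) : ∀ t ∈ Set.Icc (0:ℝ) (π/6), |2 * t ^ 3 - V n t| ≤ 18 / cb n := by
  apply abs_bound (f' := fun t => 6 * (t ^ 2 - S n t) + 3 * harmonic2 n * g n t)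
  · intro t
    have h := ((hasDerivAt_pow 3 t).const_mul 2).sub (V_deriv n t)
    have e : 6 * (t ^ 2 - S n t) + 3 * harmonic2 n * g n t
        = 2 * ((3:ℕ) * t ^ (3 - 1)) - (6 * S n t - 3 * harmonic2 n * g n t) := by push_cast; ring
    rwa [e]
  · simp [V_zero]
  · intro t ht
    have h1 := F_bound n t ht
    have h2 := g_bound n ht
    have hH0 := harmonic2_nonneg n
    have hH2 := harmonic2_le_two n
    have hcb := cb_pos n
    calc |6 * (t ^ 2 - S n t) + 3 * harmonic2 n * g n t|
        ≤ |6 * (t ^ 2 - S n t)| + |3 * harmonic2 n * g n t| := abs_add_le _ _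
      _ = 6 * |t ^ 2 - S n t| + 3 * harmonic2 n * |g n t| := by
          rw [abs_mul, abs_mul, abs_mul]
          simp [abs_of_nonneg hH0]
      _ ≤ 6 * (2 / cb n) + 3 * 2 * (1 / cb n) := by
          have hg0 : (0:ℝ) ≤ |g n t| := abs_nonneg _
          have hmul : harmonic2 n * |g n t| ≤ 2 * (1 / cb n) :=
            mul_le_mul hH2 h2 hg0 (by norm_num)
          linarith
      _ = 18 / cb n := by ring

lemma G_bound (n : ℕ) : ∀ t ∈ Set.Icc (0:ℝ) (π/6), |t ^ 4 - U n t| ≤ 36 / cb n := by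
  apply abs_bound (f' := fun t => 2 * (2 * t ^ 3 - V n t))
  · intro t
    have h := (hasDerivAt_pow 4 t).sub (U_deriv n t)
    have e : 2 * (2 * t ^ 3 - V n t) = (4:ℕ) * t ^ (4 - 1) - 2 * V n t := by push_cast; ring
    rwa [e]
  · simp [U_zero]
  · intro t ht
    rw [abs_mul, abs_two]
    have := W_bound n t ht
    rw [show (36:ℝ) / cb n = 2 * (18 / cb n) from by ring]
    gcongr

lemma U_pi6 (n : ℕ) :
    U n (π/6) = ∑ k ∈ Finset.range n,
      (3/2) * harmonic2 k / (((k:ℝ) + 1) ^ 2 * cb (k + 1)) := by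
  unfold U
  refine Finset.sum_congr rfl (fun k _ => ?_)
  rw [sin_pi_div_six]
  norm_num

end Stmt9Aux

open Stmt9Aux

theorem stmt_9 :
    HasSum (fun k : ℕ =>
      harmonic2 k /
        (((k + 1 : ℕ) : ℝ) ^ 2 * (Nat.choose (2 * (k + 1)) (k + 1) : ℝ)))
      (π ^ 4 / 1944) := by
  have hchoose : ∀ k : ℕ, (Nat.choose (2 * (k + 1)) (k + 1) : ℝ) = cb (k + 1) := by
    intro k; rfl
  have hnn : ∀ k : ℕ, 0 ≤ harmonic2 k /
      (((k + 1 : ℕ) : ℝ) ^ 2 * (Nat.choose (2 * (k + 1)) (k + 1) : ℝ)) := by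
    intro k
    apply div_nonneg (harmonic2_nonneg k)
    apply mul_nonneg (by positivity)
    rw [hchoose k]
    exact (cb_pos _).le
  rw [hasSum_iff_tendsto_nat_of_nonneg hnn]
  have hP : ∀ n : ℕ, ∑ k ∈ Finset.range n, harmonic2 k /
      (((k + 1 : ℕ) : ℝ) ^ 2 * (Nat.choose (2 * (k + 1)) (k + 1) : ℝ))
      = (2 / 3) * U n (π/6) := by
    intro n
    rw [U_pi6, Finset.mul_sum]
    refine Finset.sum_congr rfl (fun k _ => ?_)
    rw [hchoose k]
    push_cast
    have h2 : cb (k + 1) ≠ 0 := (cb_pos (k + 1)).ne'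
    have h3 : ((k : ℝ) + 1) ≠ 0 := by positivity
    field_simp
  have hL : π ^ 4 / 1944 = (2 / 3) * (π/6) ^ 4 := by ring
  have hdist : ∀ n : ℕ, |∑ k ∈ Finset.range n, harmonic2 k /
      (((k + 1 : ℕ) : ℝ) ^ 2 * (Nat.choose (2 * (k + 1)) (k + 1) : ℝ)) - π ^ 4 / 1944|
      ≤ 24 * (1/2 : ℝ) ^ n := by
    intro n
    rw [hP n, hL]
    have hpi6 : (π/6) ∈ Set.Icc (0:ℝ) (π/6) := ⟨pi6_nonneg, le_refl _⟩
    have hG := G_bound n (π/6) hpi6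
    have e : (2:ℝ)/3 * U n (π/6) - 2/3 * (π/6)^4 = -(2/3 * ((π/6)^4 - U n (π/6))) := by ring
    rw [e, abs_neg, abs_mul]
    have h23 : |(2:ℝ)/3| = 2/3 := by norm_num
    rw [h23]
    have hcb : (1:ℝ) / cb n ≤ (1/2) ^ n := by
      rw [one_div_pow]
      exact one_div_le_one_div_of_le (by positivity) (two_pow_le_cb n)
    calc (2:ℝ)/3 * |(π/6)^4 - U n (π/6)| ≤ 2/3 * (36 / cb n) := by gcongr
      _ = 24 * (1 / cb n) := by ring
      _ ≤ 24 * (1/2) ^ n := by gcongr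
  have h0 : Filter.Tendsto (fun n : ℕ => (24:ℝ) * (1/2)^n) Filter.atTop (nhds 0) := by
    have h := tendsto_pow_atTop_nhds_zero_of_lt_one (by norm_num : (0:ℝ) ≤ 1/2) (by norm_num : (1/2:ℝ) < 1)
    have h2 := h.const_mul (24:ℝ)
    rwa [mul_zero] at h2
  rw [tendsto_iff_dist_tendsto_zero]
  refine squeeze_zero (fun n => dist_nonneg) (fun n => ?_) h0
  rw [Real.dist_eq]
  exact hdist n
end
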